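/- arXiv:1010.1394 — 2 statements merged into one kernel-verified Lean document; each statement's English description precedes it below -/
import Mathlib

section
/- Let δ > 0, let R* be a δ-regular tree of cubes with root [0,1)^d, and let μ be a Borel probability measure on [0,1)^d. Then for μ-almost every x, lim_{n→∞} (1/n)·( log(1/ℓ(R_n(x))) − Σ_{i=0}^{n-1} λ(R_i(x)) ) = 0. -/
open MeasureTheory Filter Metric Set
open scoped ENNReal NNReal

/-- The unit cube `[0,1)^d`. -/
def unitCube (d : ℕ) : Set (EuclideanSpace ℝ (Fin d)) :=
  {x | ∀ j : Fin d, 0 ≤ x j ∧ x j < 1}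

/-- The half-open axis-parallel cube with corner `a` and side `l`. -/
def cubeSet {d : ℕ} (a : EuclideanSpace ℝ (Fin d)) (l : ℝ) : Set (EuclideanSpace ℝ (Fin d)) :=
  {y | ∀ j : Fin d, a j ≤ y j ∧ y j < a j + l}

/-- A `δ`-regular tree of half-open cubes with root `[0,1)^d`, encoded by the functions
`x ↦ R_n(x)` (given by a corner and a side length). At each level the cubes containing
points of the unit cube form a partition of their parent into finitely many cubes,
and all side ratios lie in `[δ, 1−δ]`. -/
structure CubeTree (d : ℕ) (δ : ℝ) where
  corner : ℕ → EuclideanSpace ℝ (Fin d) → EuclideanSpace ℝ (Fin d)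
  side : ℕ → EuclideanSpace ℝ (Fin d) → ℝ
  corner_zero : ∀ x ∈ unitCube d, corner 0 x = 0
  side_zero : ∀ x ∈ unitCube d, side 0 x = 1
  mem_node : ∀ n, ∀ x ∈ unitCube d, x ∈ cubeSet (corner n x) (side n x)
  side_pos : ∀ n, ∀ x ∈ unitCube d, 0 < side n x
  compat : ∀ n, ∀ x ∈ unitCube d, ∀ y ∈ unitCube d,
    y ∈ cubeSet (corner n x) (side n x) → corner n y = corner n x ∧ side n y = side n x
  nested : ∀ n, ∀ x ∈ unitCube d,
    cubeSet (corner (n + 1) x) (side (n + 1) x) ⊆ cubeSet (corner n x) (side n x)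
  regular : ∀ n, ∀ x ∈ unitCube d,
    δ ≤ side (n + 1) x / side n x ∧ side (n + 1) x / side n x ≤ 1 - δ
  finiteChildren : ∀ n, ∀ x ∈ unitCube d,
    Set.Finite {c : EuclideanSpace ℝ (Fin d) × ℝ |
      ∃ y ∈ unitCube d, y ∈ cubeSet (corner n x) (side n x) ∧
        c = (corner (n + 1) y, side (n + 1) y)}

/-- The cube `R_n(x)` of the tree, as a set. -/
def CubeTree.node {d : ℕ} {δ : ℝ} (T : CubeTree d δ) (n : ℕ)
    (x : EuclideanSpace ℝ (Fin d)) : Set (EuclideanSpace ℝ (Fin d)) :=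
  cubeSet (T.corner n x) (T.side n x)

/-- The offspring of the cube `R_n(x)`, as (corner, side) pairs. -/
def CubeTree.children {d : ℕ} {δ : ℝ} (T : CubeTree d δ) (n : ℕ)
    (x : EuclideanSpace ℝ (Fin d)) : Set (EuclideanSpace ℝ (Fin d) × ℝ) :=
  {c | ∃ y ∈ unitCube d, y ∈ T.node n x ∧ c = (T.corner (n + 1) y, T.side (n + 1) y)}

/-- The entropy `H(R_n(x)) = Σ_{R ∈ R(Q)} μ^Q(R)·log(1/μ^Q(R))` where `μ^Q(R) = μ(R)/μ(Q)`. -/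
noncomputable def treeEntropy {d : ℕ} {δ : ℝ} (μ : Measure (EuclideanSpace ℝ (Fin d)))
    (T : CubeTree d δ) (n : ℕ) (x : EuclideanSpace ℝ (Fin d)) : ℝ :=
  ∑ᶠ c ∈ T.children n x,
    Real.negMulLog ((μ (cubeSet c.1 c.2)).toReal / (μ (T.node n x)).toReal)

/-- The Lyapunov exponent `λ(R_n(x)) = Σ_{R ∈ R(Q)} μ^Q(R)·log(ℓ(Q)/ℓ(R))`. -/
noncomputable def treeLyap {d : ℕ} {δ : ℝ} (μ : Measure (EuclideanSpace ℝ (Fin d)))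
    (T : CubeTree d δ) (n : ℕ) (x : EuclideanSpace ℝ (Fin d)) : ℝ :=
  ∑ᶠ c ∈ T.children n x,
    ((μ (cubeSet c.1 c.2)).toReal / (μ (T.node n x)).toReal) * Real.log (T.side n x / c.2)

set_option maxHeartbeats 1000000

namespace TreeLLN

variable {d : ℕ} {δ : ℝ}

abbrev Pt (d : ℕ) := EuclideanSpace ℝ (Fin d)

/-- The (corner, side) pair of the level-`n` cube containing `x`. -/
def pr (T : CubeTree d δ) (n : ℕ) (x : Pt d) : Pt d × ℝ :=
  (T.corner n x, T.side n x)

lemma measurableSet_cubeSet (a : Pt d) (l : ℝ) : MeasurableSet (cubeSet a l) := by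
  have : cubeSet a l = ⋂ j, (fun y : Pt d => y j) ⁻¹' (Set.Ico (a j) (a j + l)) := by
    ext y; simp [cubeSet, Set.mem_Ico]
  rw [this]
  exact MeasurableSet.iInter fun j => (by fun_prop : Measurable fun y : Pt d => y j) measurableSet_Ico

lemma measurableSet_unitCube : MeasurableSet (unitCube d) := by
  have : unitCube d = ⋂ j, (fun y : Pt d => y j) ⁻¹' (Set.Ico 0 1) := by
    ext y; simp [unitCube, Set.mem_Ico]
  rw [this]
  exact MeasurableSet.iInter fun j => (by fun_prop : Measurable fun y : Pt d => y j) measurableSet_Ico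

lemma zero_mem_unitCube : (0 : Pt d) ∈ unitCube d := by
  intro j
  simp

/-- Level-`n` pairs. -/
def Lv (T : CubeTree d δ) (n : ℕ) : Set (Pt d × ℝ) :=
  {c | ∃ y ∈ unitCube d, c = pr T n y}

/-- Children of a pair. -/
def chOf (T : CubeTree d δ) (n : ℕ) (c : Pt d × ℝ) : Set (Pt d × ℝ) :=
  {c' | ∃ y ∈ unitCube d, y ∈ cubeSet c.1 c.2 ∧ c' = pr T (n + 1) y}

lemma children_eq (T : CubeTree d δ) (n : ℕ) (x : Pt d) :
    T.children n x = chOf T n (pr T n x) := rfl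

lemma mem_own (T : CubeTree d δ) {x : Pt d} (hx : x ∈ unitCube d) (n : ℕ) :
    x ∈ cubeSet (pr T n x).1 (pr T n x).2 := T.mem_node n x hx

lemma compat' (T : CubeTree d δ) {x y : Pt d} (hx : x ∈ unitCube d) (hy : y ∈ unitCube d)
    (n : ℕ) (h : y ∈ cubeSet (pr T n x).1 (pr T n x).2) : pr T n y = pr T n x := by
  obtain ⟨h1, h2⟩ := T.compat n x hx y hy h
  simp [pr, h1, h2]

lemma pr_mem_Lv (T : CubeTree d δ) {x : Pt d} (hx : x ∈ unitCube d) (n : ℕ) :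
    pr T n x ∈ Lv T n := ⟨x, hx, rfl⟩

lemma lv_disj (T : CubeTree d δ) {n : ℕ} {c₁ c₂ : Pt d × ℝ}
    (h1 : c₁ ∈ Lv T n) (h2 : c₂ ∈ Lv T n) {z : Pt d} (hz : z ∈ unitCube d)
    (hz1 : z ∈ cubeSet c₁.1 c₁.2) (hz2 : z ∈ cubeSet c₂.1 c₂.2) : c₁ = c₂ := by
  obtain ⟨y1, hy1, rfl⟩ := h1
  obtain ⟨y2, hy2, rfl⟩ := h2
  rw [← compat' T hy1 hz n hz1, compat' T hy2 hz n hz2]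

lemma child_sub (T : CubeTree d δ) {n : ℕ} {c c' : Pt d × ℝ}
    (hc : c ∈ Lv T n) (h : c' ∈ chOf T n c) :
    cubeSet c'.1 c'.2 ⊆ cubeSet c.1 c.2 := by
  obtain ⟨y, hy, rfl⟩ := hc
  obtain ⟨z, hz, hzc, rfl⟩ := h
  have hpz : pr T n z = pr T n y := compat' T hy hz n hzc
  calc cubeSet (pr T (n+1) z).1 (pr T (n+1) z).2
      ⊆ cubeSet (pr T n z).1 (pr T n z).2 := T.nested n z hz
    _ = cubeSet (pr T n y).1 (pr T n y).2 := by rw [hpz]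

lemma child_mem_lv (T : CubeTree d δ) {n : ℕ} {c c' : Pt d × ℝ}
    (h : c' ∈ chOf T n c) : c' ∈ Lv T (n + 1) := by
  obtain ⟨z, hz, _, rfl⟩ := h
  exact ⟨z, hz, rfl⟩

lemma ratio (T : CubeTree d δ) {n : ℕ} {c c' : Pt d × ℝ}
    (hc : c ∈ Lv T n) (hc' : c' ∈ chOf T n c) :
    δ ≤ c'.2 / c.2 ∧ c'.2 / c.2 ≤ 1 - δ ∧ 0 < c.2 ∧ 0 < c'.2 := by
  obtain ⟨y, hy, rfl⟩ := hc
  obtain ⟨z, hz, hzc, rfl⟩ := hc'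
  have hpz : pr T n z = pr T n y := compat' T hy hz n hzc
  have hs : T.side n z = (pr T n y).2 := congrArg Prod.snd hpz
  have h1 := T.regular n z hz
  have h2 := T.side_pos n z hz
  have h3 := T.side_pos (n+1) z hz
  refine ⟨?_, ?_, ?_, h3⟩
  · simpa [pr, hs] using h1.1
  · simpa [pr, hs] using h1.2
  · rw [← hs]; exact h2

lemma chOf_finite (T : CubeTree d δ) {n : ℕ} {c : Pt d × ℝ} (hc : c ∈ Lv T n) :
    (chOf T n c).Finite := by
  obtain ⟨y, hy, rfl⟩ := hc
  exact T.finiteChildren n y hy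

lemma lv_finite (T : CubeTree d δ) (n : ℕ) : (Lv T n).Finite := by
  induction n with
  | zero =>
    apply Set.Finite.subset (Set.finite_singleton ((0 : Pt d), (1 : ℝ)))
    rintro c ⟨y, hy, rfl⟩
    simp [pr, T.corner_zero y hy, T.side_zero y hy]
  | succ n ih =>
    have hsub : Lv T (n + 1) ⊆ ⋃ c ∈ Lv T n, chOf T n c := by
      rintro c' ⟨y, hy, rfl⟩
      exact Set.mem_biUnion (pr_mem_Lv T hy n) ⟨y, hy, T.mem_node n y hy, rfl⟩
    exact (Set.Finite.biUnion ih (fun c hc => chOf_finite T hc)).subset hsub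

lemma lv_succ_eq (T : CubeTree d δ) (n : ℕ) :
    Lv T (n + 1) = ⋃ c ∈ Lv T n, chOf T n c := by
  ext c'
  constructor
  · rintro ⟨y, hy, rfl⟩
    exact Set.mem_biUnion (pr_mem_Lv T hy n) ⟨y, hy, T.mem_node n y hy, rfl⟩
  · rintro h
    obtain ⟨c, hc, hc'⟩ := Set.mem_iUnion₂.1 h
    exact child_mem_lv T hc'

lemma parent_unique (T : CubeTree d δ) {n : ℕ} {c₁ c₂ c' : Pt d × ℝ}
    (hc1 : c₁ ∈ Lv T n) (hc2 : c₂ ∈ Lv T n)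
    (h1 : c' ∈ chOf T n c₁) (h2 : c' ∈ chOf T n c₂) : c₁ = c₂ := by
  obtain ⟨z, hz, hzc, rfl⟩ := h1
  have hz1 : z ∈ cubeSet (pr T (n+1) z).1 (pr T (n+1) z).2 := mem_own T hz (n+1)
  have hz2 : z ∈ cubeSet c₂.1 c₂.2 := child_sub T hc2 h2 hz1
  exact lv_disj T hc1 hc2 hz hzc hz2


noncomputable def lvF (T : CubeTree d δ) (n : ℕ) : Finset (Pt d × ℝ) :=
  (lv_finite T n).toFinset

lemma mem_lvF {T : CubeTree d δ} {n : ℕ} {c : Pt d × ℝ} :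
    c ∈ lvF T n ↔ c ∈ Lv T n := Set.Finite.mem_toFinset _

open Classical in
noncomputable def chF (T : CubeTree d δ) (n : ℕ) (c : Pt d × ℝ) : Finset (Pt d × ℝ) :=
  if h : c ∈ Lv T n then (chOf_finite T h).toFinset else ∅

lemma mem_chF {T : CubeTree d δ} {n : ℕ} {c c' : Pt d × ℝ} (hc : c ∈ Lv T n) :
    c' ∈ chF T n c ↔ c' ∈ chOf T n c := by
  rw [chF, dif_pos hc]; exact Set.Finite.mem_toFinset _

lemma coe_chF {T : CubeTree d δ} {n : ℕ} {c : Pt d × ℝ} (hc : c ∈ Lv T n) :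
    (chF T n c : Set (Pt d × ℝ)) = chOf T n c := by
  rw [chF, dif_pos hc]; exact Set.Finite.coe_toFinset _

section Meas

variable (T : CubeTree d δ) (μ : Measure (Pt d)) [IsProbabilityMeasure μ]

lemma compl_null (hsupp : μ (unitCube d) = 1) : μ (unitCube d)ᶜ = 0 := by
  have h := measure_compl (μ := μ) measurableSet_unitCube (measure_ne_top μ _)
  rw [hsupp, measure_univ] at h
  simp [h]

lemma meas_inter (hsupp : μ (unitCube d) = 1) (A : Set (Pt d)) :
    μ (A ∩ unitCube d) = μ A := by
  refine le_antisymm (measure_mono inter_subset_left) ?_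
  have : A ⊆ (A ∩ unitCube d) ∪ (unitCube d)ᶜ := by
    intro x hx
    by_cases h : x ∈ unitCube d
    · exact Or.inl ⟨hx, h⟩
    · exact Or.inr h
  calc μ A ≤ μ ((A ∩ unitCube d) ∪ (unitCube d)ᶜ) := measure_mono this
    _ ≤ μ (A ∩ unitCube d) + μ (unitCube d)ᶜ := measure_union_le _ _
    _ = μ (A ∩ unitCube d) := by rw [compl_null μ hsupp, add_zero]

lemma sum_children (hsupp : μ (unitCube d) = 1) {n : ℕ} {c : Pt d × ℝ} (hc : c ∈ Lv T n) :
    ∑ c' ∈ chF T n c, μ (cubeSet c'.1 c'.2) = μ (cubeSet c.1 c.2) := by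
  have hmeas : ∀ c' ∈ chF T n c, MeasurableSet (cubeSet c'.1 c'.2 ∩ unitCube d) :=
    fun c' _ => (measurableSet_cubeSet _ _).inter measurableSet_unitCube
  have hdisj : (↑(chF T n c) : Set (Pt d × ℝ)).PairwiseDisjoint
      (fun c' => cubeSet c'.1 c'.2 ∩ unitCube d) := by
    intro a ha b hb hab
    have ha' := (mem_chF hc).1 ha
    have hb' := (mem_chF hc).1 hb
    refine Set.disjoint_left.2 fun z hza hzb => hab ?_
    exact lv_disj T (child_mem_lv T ha') (child_mem_lv T hb') hza.2 hza.1 hzb.1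
  have hunion : (⋃ c' ∈ chF T n c, cubeSet c'.1 c'.2 ∩ unitCube d)
      = cubeSet c.1 c.2 ∩ unitCube d := by
    ext z
    simp only [Set.mem_iUnion, exists_prop]
    constructor
    · rintro ⟨c', hc', hz, hzU⟩
      exact ⟨child_sub T hc ((mem_chF hc).1 hc') hz, hzU⟩
    · rintro ⟨hz, hzU⟩
      refine ⟨pr T (n+1) z, (mem_chF hc).2 ⟨z, hzU, hz, rfl⟩, mem_own T hzU (n+1), hzU⟩
  calc ∑ c' ∈ chF T n c, μ (cubeSet c'.1 c'.2)
      = ∑ c' ∈ chF T n c, μ (cubeSet c'.1 c'.2 ∩ unitCube d) := by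
        refine Finset.sum_congr rfl fun c' _ => (meas_inter μ hsupp _).symm
    _ = μ (⋃ c' ∈ chF T n c, cubeSet c'.1 c'.2 ∩ unitCube d) :=
        (measure_biUnion_finset hdisj hmeas).symm
    _ = μ (cubeSet c.1 c.2 ∩ unitCube d) := by rw [hunion]
    _ = μ (cubeSet c.1 c.2) := meas_inter μ hsupp _

lemma sum_lv (hsupp : μ (unitCube d) = 1) (n : ℕ) : ∑ c ∈ lvF T n, μ (cubeSet c.1 c.2) = 1 := by
  have hmeas : ∀ c ∈ lvF T n, MeasurableSet (cubeSet c.1 c.2 ∩ unitCube d) :=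
    fun c _ => (measurableSet_cubeSet _ _).inter measurableSet_unitCube
  have hdisj : (↑(lvF T n) : Set (Pt d × ℝ)).PairwiseDisjoint
      (fun c => cubeSet c.1 c.2 ∩ unitCube d) := by
    intro a ha b hb hab
    have ha' : a ∈ Lv T n := mem_lvF.1 ha
    have hb' : b ∈ Lv T n := mem_lvF.1 hb
    refine Set.disjoint_left.2 fun z hza hzb => hab ?_
    exact lv_disj T ha' hb' hza.2 hza.1 hzb.1
  have hunion : (⋃ c ∈ lvF T n, cubeSet c.1 c.2 ∩ unitCube d) = unitCube d := by
    ext z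
    simp only [Set.mem_iUnion, exists_prop]
    constructor
    · rintro ⟨c, _, _, hzU⟩; exact hzU
    · intro hzU
      exact ⟨pr T n z, mem_lvF.2 (pr_mem_Lv T hzU n), mem_own T hzU n, hzU⟩
  calc ∑ c ∈ lvF T n, μ (cubeSet c.1 c.2)
      = ∑ c ∈ lvF T n, μ (cubeSet c.1 c.2 ∩ unitCube d) := by
        refine Finset.sum_congr rfl fun c _ => (meas_inter μ hsupp _).symm
    _ = μ (⋃ c ∈ lvF T n, cubeSet c.1 c.2 ∩ unitCube d) :=
        (measure_biUnion_finset hdisj hmeas).symm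
    _ = 1 := by rw [hunion, hsupp]

end Meas

/-- real measure of the cube of a pair -/
noncomputable def mr (μ : Measure (Pt d)) (c : Pt d × ℝ) : ℝ :=
  (μ (cubeSet c.1 c.2)).toReal

lemma mr_nonneg (μ : Measure (Pt d)) (c : Pt d × ℝ) : 0 ≤ mr μ c := ENNReal.toReal_nonneg

section Meas2

variable (T : CubeTree d δ) (μ : Measure (Pt d)) [IsProbabilityMeasure μ]

lemma mr_sum_children (hsupp : μ (unitCube d) = 1) {n : ℕ} {c : Pt d × ℝ} (hc : c ∈ Lv T n) :
    ∑ c' ∈ chF T n c, mr μ c' = mr μ c := by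
  rw [mr, ← sum_children T μ hsupp hc, ENNReal.toReal_sum]
  · rfl
  · exact fun a _ => measure_ne_top μ _

lemma mr_sum_lv (hsupp : μ (unitCube d) = 1) (n : ℕ) : ∑ c ∈ lvF T n, mr μ c = 1 := by
  have h := sum_lv T μ hsupp n
  have := ENNReal.toReal_sum (s := lvF T n)
    (f := fun c => μ (cubeSet c.1 c.2)) (fun a _ => measure_ne_top μ _)
  rw [h] at this
  simpa [mr] using this.symm

end Meas2


/-- The Lyapunov exponent as a function of the pair. -/
noncomputable def Lam (μ : Measure (Pt d)) (T : CubeTree d δ) (n : ℕ) (c : Pt d × ℝ) : ℝ :=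
  ∑ᶠ c' ∈ chOf T n c,
    ((μ (cubeSet c'.1 c'.2)).toReal / (μ (cubeSet c.1 c.2)).toReal) * Real.log (c.2 / c'.2)

lemma treeLyap_eq (μ : Measure (Pt d)) (T : CubeTree d δ) (n : ℕ) (x : Pt d) :
    treeLyap μ T n x = Lam μ T n (pr T n x) := rfl

lemma Lam_eq_sum (μ : Measure (Pt d)) (T : CubeTree d δ) {n : ℕ} {c : Pt d × ℝ}
    (hc : c ∈ Lv T n) :
    Lam μ T n c = ∑ c' ∈ chF T n c, (mr μ c' / mr μ c) * Real.log (c.2 / c'.2) := by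
  rw [Lam, ← coe_chF hc, finsum_mem_coe_finset]
  rfl

section Bounds

variable {T : CubeTree d δ}

lemma delta_le_half (T : CubeTree d δ) : δ ≤ 1 - δ := by
  have h := T.regular 0 0 zero_mem_unitCube
  linarith [h.1, h.2]

lemma log_ratio_bound (hδ : 0 < δ) {n : ℕ} {c c' : Pt d × ℝ} (hc : c ∈ Lv T n) (hc' : c' ∈ chOf T n c) :
    0 ≤ Real.log (c.2 / c'.2) ∧ Real.log (c.2 / c'.2) ≤ Real.log (1 / δ) := by
  obtain ⟨h1, h2, h3, h4⟩ := ratio T hc hc'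
  have hd1 : c'.2 ≤ (1 - δ) * c.2 := by
    rw [div_le_iff₀ h3] at h2; linarith
  have hd2 : δ * c.2 ≤ c'.2 := by
    rw [le_div_iff₀ h3] at h1; linarith
  constructor
  · apply Real.log_nonneg
    rw [le_div_iff₀ h4]
    nlinarith [hδ.le, h3.le]
  · apply Real.log_le_log (by positivity)
    rw [div_le_div_iff₀ h4 hδ]
    nlinarith

lemma Lam_nonneg (hδ : 0 < δ) (μ : Measure (Pt d)) {n : ℕ} {c : Pt d × ℝ} (hc : c ∈ Lv T n) :
    0 ≤ Lam μ T n c := by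
  rw [Lam_eq_sum μ T hc]
  refine Finset.sum_nonneg fun c' hc' => ?_
  have := log_ratio_bound hδ hc ((mem_chF hc).1 hc')
  have hw : 0 ≤ mr μ c' / mr μ c := div_nonneg (mr_nonneg μ _) (mr_nonneg μ _)
  exact mul_nonneg hw this.1

lemma Lam_le (hδ : 0 < δ) (μ : Measure (Pt d)) [IsProbabilityMeasure μ] (hsupp : μ (unitCube d) = 1)
    {n : ℕ} {c : Pt d × ℝ} (hc : c ∈ Lv T n) :
    Lam μ T n c ≤ Real.log (1 / δ) := by
  have hL0 : 0 ≤ Real.log (1 / δ) := by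
    apply Real.log_nonneg
    rw [le_div_iff₀ hδ]
    have := delta_le_half T
    linarith
  rw [Lam_eq_sum μ T hc]
  have h1 : ∀ c' ∈ chF T n c, (mr μ c' / mr μ c) * Real.log (c.2 / c'.2)
      ≤ (mr μ c' / mr μ c) * Real.log (1 / δ) := by
    intro c' hc'
    have hb := log_ratio_bound hδ hc ((mem_chF hc).1 hc')
    have hw : 0 ≤ mr μ c' / mr μ c := div_nonneg (mr_nonneg μ _) (mr_nonneg μ _)
    exact mul_le_mul_of_nonneg_left hb.2 hw
  calc ∑ c' ∈ chF T n c, (mr μ c' / mr μ c) * Real.log (c.2 / c'.2)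
      ≤ ∑ c' ∈ chF T n c, (mr μ c' / mr μ c) * Real.log (1 / δ) := Finset.sum_le_sum h1
    _ = (∑ c' ∈ chF T n c, mr μ c' / mr μ c) * Real.log (1 / δ) := by
        rw [Finset.sum_mul]
    _ ≤ 1 * Real.log (1 / δ) := by
        apply mul_le_mul_of_nonneg_right _ hL0
        rw [← Finset.sum_div, mr_sum_children T μ hsupp hc]
        rcases eq_or_ne (mr μ c) 0 with h | h
        · rw [h]; simp
        · rw [div_self h]
    _ = Real.log (1 / δ) := one_mul _

end Bounds

/-- The quantity whose a.e. `o(n)` behaviour we must establish. -/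
noncomputable def Gf (μ : Measure (Pt d)) (T : CubeTree d δ) (n : ℕ) (x : Pt d) : ℝ :=
  Real.log (1 / T.side n x) - ∑ i ∈ Finset.range n, treeLyap μ T i x

section GfLemmas

variable {T : CubeTree d δ}

lemma node_anti (T : CubeTree d δ) {x : Pt d} (hx : x ∈ unitCube d) {m n : ℕ} (hmn : m ≤ n) :
    cubeSet (pr T n x).1 (pr T n x).2 ⊆ cubeSet (pr T m x).1 (pr T m x).2 := by
  induction n, hmn using Nat.le_induction with
  | base => exact subset_rfl
  | succ n hmn ih => exact (T.nested n x hx).trans ih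

lemma pr_congr (T : CubeTree d δ) {x y : Pt d} (hx : x ∈ unitCube d) (hy : y ∈ unitCube d)
    {m n : ℕ} (hmn : m ≤ n) (h : pr T n x = pr T n y) : pr T m x = pr T m y := by
  have hyx : y ∈ cubeSet (pr T m x).1 (pr T m x).2 := by
    apply node_anti T hx hmn
    rw [h]
    exact mem_own T hy n
  exact (compat' T hx hy m hyx).symm

lemma Gf_congr (μ : Measure (Pt d)) {x y : Pt d} (hx : x ∈ unitCube d) (hy : y ∈ unitCube d)
    {n : ℕ} (h : pr T n x = pr T n y) : Gf μ T n x = Gf μ T n y := by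
  have hside : T.side n x = T.side n y := congrArg Prod.snd h
  rw [Gf, Gf, hside]
  congr 1
  refine Finset.sum_congr rfl fun i hi => ?_
  rw [treeLyap_eq, treeLyap_eq, pr_congr T hx hy (Finset.mem_range.1 hi).le h]

lemma Gf_succ (μ : Measure (Pt d)) {x : Pt d} (hx : x ∈ unitCube d) (n : ℕ) :
    Gf μ T (n + 1) x = Gf μ T n x
      + (Real.log (T.side n x / T.side (n + 1) x) - treeLyap μ T n x) := by
  have h1 : T.side n x ≠ 0 := (T.side_pos n x hx).ne'
  have h2 : T.side (n + 1) x ≠ 0 := (T.side_pos (n + 1) x hx).ne'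
  rw [Gf, Gf, Finset.sum_range_succ, Real.log_div h1 h2, one_div, one_div,
    Real.log_inv, Real.log_inv]
  ring

lemma Gf_zero (μ : Measure (Pt d)) {x : Pt d} (hx : x ∈ unitCube d) : Gf μ T 0 x = 0 := by
  rw [Gf, T.side_zero x hx]
  simp

lemma incr_bound (hδ : 0 < δ) (μ : Measure (Pt d)) [IsProbabilityMeasure μ]
    (hsupp : μ (unitCube d) = 1) {x : Pt d} (hx : x ∈ unitCube d) (n : ℕ) :
    |Gf μ T (n + 1) x - Gf μ T n x| ≤ Real.log (1 / δ) := by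
  rw [Gf_succ μ hx n, add_sub_cancel_left]
  have hc : pr T n x ∈ Lv T n := pr_mem_Lv T hx n
  have hc' : pr T (n + 1) x ∈ chOf T n (pr T n x) :=
    ⟨x, hx, mem_own T hx n, rfl⟩
  have hlog := log_ratio_bound hδ hc hc'
  have hlam1 := Lam_nonneg hδ μ hc
  have hlam2 := Lam_le hδ μ hsupp hc
  rw [treeLyap_eq]
  have hxx : Real.log (T.side n x / T.side (n + 1) x)
      = Real.log ((pr T n x).2 / (pr T (n + 1) x).2) := rfl
  rw [hxx, abs_le]
  constructor <;> [linarith [hlog.1]; linarith [hlog.2]]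

lemma Gf_diff_bound (hδ : 0 < δ) (μ : Measure (Pt d)) [IsProbabilityMeasure μ]
    (hsupp : μ (unitCube d) = 1) {x : Pt d} (hx : x ∈ unitCube d) {m n : ℕ} (hmn : m ≤ n) :
    |Gf μ T n x - Gf μ T m x| ≤ ((n - m : ℕ) : ℝ) * Real.log (1 / δ) := by
  induction n, hmn using Nat.le_induction with
  | base => simp
  | succ n hmn ih =>
    have h1 := incr_bound (T := T) hδ μ hsupp hx n
    have h2 : (n + 1 - m : ℕ) = (n - m : ℕ) + 1 := by omega
    rw [h2]
    push_cast
    calc |Gf μ T (n+1) x - Gf μ T m x|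
        ≤ |Gf μ T (n+1) x - Gf μ T n x| + |Gf μ T n x - Gf μ T m x| := abs_sub_le _ _ _
      _ ≤ Real.log (1 / δ) + ((n - m : ℕ) : ℝ) * Real.log (1 / δ) := add_le_add h1 ih
      _ = (((n - m : ℕ) : ℝ) + 1) * Real.log (1 / δ) := by ring

end GfLemmas


open Classical in
/-- A representative point of the cube with pair `c` at level `n`. -/
noncomputable def rep (T : CubeTree d δ) (n : ℕ) (c : Pt d × ℝ) : Pt d :=
  if h : c ∈ Lv T n then h.choose else 0

lemma rep_spec {T : CubeTree d δ} {n : ℕ} {c : Pt d × ℝ} (hc : c ∈ Lv T n) :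
    rep T n c ∈ unitCube d ∧ c = pr T n (rep T n c) := by
  rw [rep, dif_pos hc]
  exact hc.choose_spec

/-- Value of `Gf` on a level-`n` cube. -/
noncomputable def Gval (μ : Measure (Pt d)) (T : CubeTree d δ) (n : ℕ) (c : Pt d × ℝ) : ℝ :=
  Gf μ T n (rep T n c)

lemma Gf_eq_val (μ : Measure (Pt d)) {T : CubeTree d δ} {x : Pt d} (hx : x ∈ unitCube d)
    (n : ℕ) : Gf μ T n x = Gval μ T n (pr T n x) := by
  have hc := pr_mem_Lv T hx n
  exact Gf_congr μ hx (rep_spec hc).1 (rep_spec hc).2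

/-- Second moment of `Gf` at level `n`. -/
noncomputable def V (μ : Measure (Pt d)) (T : CubeTree d δ) (n : ℕ) : ℝ :=
  ∑ c ∈ lvF T n, mr μ c * (Gval μ T n c) ^ 2

lemma V_nonneg (μ : Measure (Pt d)) (T : CubeTree d δ) (n : ℕ) : 0 ≤ V μ T n :=
  Finset.sum_nonneg fun c _ => mul_nonneg (mr_nonneg μ c) (sq_nonneg _)

lemma V_zero (μ : Measure (Pt d)) (T : CubeTree d δ) : V μ T 0 = 0 := by
  refine Finset.sum_eq_zero fun c hc => ?_
  have hc' := mem_lvF.1 hc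
  rw [Gval, Gf_zero μ (rep_spec hc').1]
  ring

section VBound

variable (T : CubeTree d δ) (μ : Measure (Pt d)) [IsProbabilityMeasure μ]

/-- The key martingale-difference cancellation. -/
lemma sum_dv_zero (hsupp : μ (unitCube d) = 1) {n : ℕ} {c : Pt d × ℝ} (hc : c ∈ Lv T n) :
    ∑ c' ∈ chF T n c, mr μ c' * (Real.log (c.2 / c'.2) - Lam μ T n c) = 0 := by
  have hsum := mr_sum_children T μ hsupp hc
  have hLam := Lam_eq_sum μ T hc
  rcases eq_or_ne (mr μ c) 0 with h0 | h0
  · refine Finset.sum_eq_zero fun c' hc' => ?_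
    have : mr μ c' = 0 := by
      have hle : mr μ c' ≤ 0 := by
        rw [← h0, ← hsum]
        exact Finset.single_le_sum (fun a _ => mr_nonneg μ a) hc'
      exact le_antisymm hle (mr_nonneg μ c')
    rw [this, zero_mul]
  · have hS : Lam μ T n c = (∑ c' ∈ chF T n c, mr μ c' * Real.log (c.2 / c'.2)) / mr μ c := by
      rw [hLam, Finset.sum_div]
      refine Finset.sum_congr rfl fun c' _ => by ring
    have heq : ∑ c' ∈ chF T n c, mr μ c' * (Real.log (c.2 / c'.2) - Lam μ T n c)
        = (∑ c' ∈ chF T n c, mr μ c' * Real.log (c.2 / c'.2))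
          - (∑ c' ∈ chF T n c, mr μ c') * Lam μ T n c := by
      rw [Finset.sum_mul, ← Finset.sum_sub_distrib]
      exact Finset.sum_congr rfl fun c' _ => by ring
    rw [heq, hsum, hS, mul_div_cancel₀ _ h0, sub_self]

lemma dv_bound (hδ : 0 < δ) (hsupp : μ (unitCube d) = 1) {n : ℕ} {c c' : Pt d × ℝ} (hc : c ∈ Lv T n) (hc' : c' ∈ chOf T n c) :
    |Real.log (c.2 / c'.2) - Lam μ T n c| ≤ Real.log (1 / δ) := by
  have hlog := log_ratio_bound hδ hc hc'
  have h1 := Lam_nonneg hδ μ hc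
  have h2 := Lam_le hδ μ hsupp hc
  rw [abs_le]
  constructor <;> [linarith [hlog.1]; linarith [hlog.2]]

lemma V_succ (hδ : 0 < δ) (hsupp : μ (unitCube d) = 1) (n : ℕ) : V μ T (n + 1) ≤ V μ T n + Real.log (1 / δ) ^ 2 := by
  classical
  -- biUnion decomposition of level n+1
  have hbi : lvF T (n + 1) = (lvF T n).biUnion (fun c => chF T n c) := by
    ext c'
    rw [mem_lvF, Finset.mem_biUnion, lv_succ_eq]
    constructor
    · intro h
      obtain ⟨c, hc, hcc⟩ := Set.mem_iUnion₂.1 h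
      exact ⟨c, mem_lvF.2 hc, (mem_chF hc).2 hcc⟩
    · rintro ⟨c, hc, hcc⟩
      exact Set.mem_biUnion (mem_lvF.1 hc) ((mem_chF (mem_lvF.1 hc)).1 hcc)
  have hdisj : ∀ c₁ ∈ lvF T n, ∀ c₂ ∈ lvF T n, c₁ ≠ c₂ →
      Disjoint (chF T n c₁) (chF T n c₂) := by
    intro c₁ h1 c₂ h2 hne
    refine Finset.disjoint_left.2 fun a ha1 ha2 => hne ?_
    exact parent_unique T (mem_lvF.1 h1) (mem_lvF.1 h2)
      ((mem_chF (mem_lvF.1 h1)).1 ha1) ((mem_chF (mem_lvF.1 h2)).1 ha2)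
  rw [V, hbi, Finset.sum_biUnion hdisj]
  -- pointwise bound for each parent cube
  have key : ∀ c ∈ lvF T n,
      ∑ c' ∈ chF T n c, mr μ c' * (Gval μ T (n + 1) c') ^ 2
        ≤ mr μ c * (Gval μ T n c) ^ 2 + Real.log (1 / δ) ^ 2 * mr μ c := by
    intro c hcF
    have hc := mem_lvF.1 hcF
    have hval : ∀ c' ∈ chF T n c, Gval μ T (n + 1) c'
        = Gval μ T n c + (Real.log (c.2 / c'.2) - Lam μ T n c) := by
      intro c' hc'F
      have hc' := (mem_chF hc).1 hc'F
      have hc'lv : c' ∈ Lv T (n + 1) := child_mem_lv T hc'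
      obtain ⟨hrU, hrpr⟩ := rep_spec hc'lv
      set z := rep T (n + 1) c' with hz
      -- z lies in the cube of c' hence of c
      have hz1 : z ∈ cubeSet c'.1 c'.2 := by
        rw [hrpr]; exact mem_own T hrU (n + 1)
      have hz2 : z ∈ cubeSet c.1 c.2 := child_sub T hc hc' hz1
      have hprz : pr T n z = c := by
        obtain ⟨hcU, hcpr⟩ := rep_spec hc
        have : z ∈ cubeSet (pr T n (rep T n c)).1 (pr T n (rep T n c)).2 := by
          rw [← hcpr]; exact hz2
        rw [compat' T hcU hrU n this, ← hcpr]
      have hside : T.side n z = c.2 := congrArg Prod.snd hprz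
      have hside' : T.side (n + 1) z = c'.2 := (congrArg Prod.snd hrpr).symm
      rw [Gval, ← hz, Gf_succ μ hrU n, Gf_eq_val μ hrU n, hprz, hside, hside',
        treeLyap_eq, hprz]
    have hexp : ∀ c' ∈ chF T n c,
        mr μ c' * (Gval μ T (n + 1) c') ^ 2
          = mr μ c' * (Gval μ T n c) ^ 2
            + 2 * Gval μ T n c * (mr μ c' * (Real.log (c.2 / c'.2) - Lam μ T n c))
            + mr μ c' * (Real.log (c.2 / c'.2) - Lam μ T n c) ^ 2 := by
      intro c' hc'F
      rw [hval c' hc'F]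
      ring
    rw [Finset.sum_congr rfl hexp]
    rw [Finset.sum_add_distrib, Finset.sum_add_distrib, ← Finset.sum_mul,
      mr_sum_children T μ hsupp hc, ← Finset.mul_sum,
      sum_dv_zero T μ hsupp hc, mul_zero, add_zero]
    refine add_le_add_right ?_ _
    have hbd : ∀ c' ∈ chF T n c, mr μ c' * (Real.log (c.2 / c'.2) - Lam μ T n c) ^ 2
        ≤ mr μ c' * Real.log (1 / δ) ^ 2 := by
      intro c' hc'F
      have h := dv_bound T μ hδ hsupp hc ((mem_chF hc).1 hc'F)
      have h2 := sq_le_sq' (neg_le_of_abs_le h) (le_of_abs_le h)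
      exact mul_le_mul_of_nonneg_left h2 (mr_nonneg μ c')
    calc ∑ c' ∈ chF T n c, mr μ c' * (Real.log (c.2 / c'.2) - Lam μ T n c) ^ 2
        ≤ ∑ c' ∈ chF T n c, mr μ c' * Real.log (1 / δ) ^ 2 := Finset.sum_le_sum hbd
      _ = Real.log (1 / δ) ^ 2 * mr μ c := by
          rw [← Finset.sum_mul, mr_sum_children T μ hsupp hc, mul_comm]
  calc ∑ c ∈ lvF T n, ∑ c' ∈ chF T n c, mr μ c' * (Gval μ T (n + 1) c') ^ 2
      ≤ ∑ c ∈ lvF T n, (mr μ c * (Gval μ T n c) ^ 2 + Real.log (1 / δ) ^ 2 * mr μ c) :=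
        Finset.sum_le_sum key
    _ = V μ T n + Real.log (1 / δ) ^ 2 * ∑ c ∈ lvF T n, mr μ c := by
        rw [Finset.sum_add_distrib, ← Finset.mul_sum]; rfl
    _ = V μ T n + Real.log (1 / δ) ^ 2 := by rw [mr_sum_lv T μ hsupp, mul_one]

end VBound


section Final

variable (T : CubeTree d δ) (μ : Measure (Pt d)) [IsProbabilityMeasure μ]

lemma V_le (hδ : 0 < δ) (hsupp : μ (unitCube d) = 1) (n : ℕ) :
    V μ T n ≤ n * Real.log (1 / δ) ^ 2 := by
  induction n with
  | zero => simp [V_zero]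
  | succ n ih =>
    calc V μ T (n + 1) ≤ V μ T n + Real.log (1 / δ) ^ 2 := V_succ T μ hδ hsupp n
      _ ≤ n * Real.log (1 / δ) ^ 2 + Real.log (1 / δ) ^ 2 := by linarith
      _ = ((n + 1 : ℕ) : ℝ) * Real.log (1 / δ) ^ 2 := by push_cast; ring

lemma cheb (hsupp : μ (unitCube d) = 1) (n : ℕ) {t : ℝ} (ht : 0 < t) :
    μ {x | x ∈ unitCube d ∧ t ≤ |Gf μ T n x|} ≤ ENNReal.ofReal (V μ T n / t ^ 2) := by
  classical
  set Bd := (lvF T n).filter (fun c => t ≤ |Gval μ T n c|) with hBd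
  have hsub : {x | x ∈ unitCube d ∧ t ≤ |Gf μ T n x|}
      ⊆ ⋃ c ∈ Bd, cubeSet c.1 c.2 ∩ unitCube d := by
    rintro x ⟨hxU, hxt⟩
    refine Set.mem_biUnion ?_ ⟨mem_own T hxU n, hxU⟩
    refine Finset.mem_filter.2 ⟨mem_lvF.2 (pr_mem_Lv T hxU n), ?_⟩
    rwa [← Gf_eq_val μ hxU n]
  have h1 : μ {x | x ∈ unitCube d ∧ t ≤ |Gf μ T n x|}
      ≤ ∑ c ∈ Bd, μ (cubeSet c.1 c.2 ∩ unitCube d) :=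
    (measure_mono hsub).trans (measure_biUnion_finset_le _ _)
  refine h1.trans ?_
  have hne : (∑ c ∈ Bd, μ (cubeSet c.1 c.2 ∩ unitCube d)) ≠ ⊤ :=
    ENNReal.sum_ne_top.2 fun c _ => measure_ne_top μ _
  have hVt : 0 ≤ V μ T n / t ^ 2 := div_nonneg (V_nonneg μ T n) (sq_nonneg t)
  rw [ENNReal.le_ofReal_iff_toReal_le hne hVt,
    ENNReal.toReal_sum (fun c _ => measure_ne_top μ _)]
  have hterm : ∀ c ∈ Bd, (μ (cubeSet c.1 c.2 ∩ unitCube d)).toReal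
      ≤ mr μ c * (Gval μ T n c) ^ 2 / t ^ 2 := by
    intro c hcB
    have h2 := (Finset.mem_filter.1 hcB).2
    have ht2 : t ^ 2 ≤ (Gval μ T n c) ^ 2 := by
      calc t ^ 2 ≤ |Gval μ T n c| ^ 2 := pow_le_pow_left₀ ht.le h2 2
        _ = (Gval μ T n c) ^ 2 := sq_abs _
    have hone : 1 ≤ (Gval μ T n c) ^ 2 / t ^ 2 :=
      (one_le_div (pow_pos ht 2)).2 ht2
    calc (μ (cubeSet c.1 c.2 ∩ unitCube d)).toReal = mr μ c := by
          rw [meas_inter μ hsupp]; rfl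
      _ ≤ mr μ c * ((Gval μ T n c) ^ 2 / t ^ 2) :=
          le_mul_of_one_le_right (mr_nonneg μ c) hone
      _ = mr μ c * (Gval μ T n c) ^ 2 / t ^ 2 := by ring
  calc ∑ c ∈ Bd, (μ (cubeSet c.1 c.2 ∩ unitCube d)).toReal
      ≤ ∑ c ∈ Bd, mr μ c * (Gval μ T n c) ^ 2 / t ^ 2 := Finset.sum_le_sum hterm
    _ ≤ ∑ c ∈ lvF T n, mr μ c * (Gval μ T n c) ^ 2 / t ^ 2 := by
        refine Finset.sum_le_sum_of_subset_of_nonneg (Finset.filter_subset _ _) ?_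
        intro c _ _
        exact div_nonneg (mul_nonneg (mr_nonneg μ c) (sq_nonneg _)) (sq_nonneg t)
    _ = V μ T n / t ^ 2 := by rw [V, Finset.sum_div]

lemma bc (hδ : 0 < δ) (hsupp : μ (unitCube d) = 1) (k : ℕ) :
    ∀ᵐ x ∂μ, ∀ᶠ j : ℕ in atTop,
      ¬(x ∈ unitCube d ∧
        (1 / ((k : ℝ) + 1)) * ((j : ℝ) + 1) ^ 2 ≤ |Gf μ T ((j + 1) ^ 2) x|) := by
  set ε : ℝ := 1 / ((k : ℝ) + 1) with hε'
  have hε : 0 < ε := by positivity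
  set L : ℝ := Real.log (1 / δ) with hL'
  set s : ℕ → Set (Pt d) := fun j =>
    {x | x ∈ unitCube d ∧ ε * ((j : ℝ) + 1) ^ 2 ≤ |Gf μ T ((j + 1) ^ 2) x|} with hs'
  have hbound : ∀ j, μ (s j) ≤ ENNReal.ofReal ((L ^ 2 / ε ^ 2) * (1 / ((j : ℝ) + 1) ^ 2)) := by
    intro j
    have ht : 0 < ε * ((j : ℝ) + 1) ^ 2 := by positivity
    refine (cheb T μ hsupp ((j + 1) ^ 2) ht).trans (ENNReal.ofReal_le_ofReal ?_)
    have hV := V_le T μ hδ hsupp ((j + 1) ^ 2)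
    have hcast : (((j + 1) ^ 2 : ℕ) : ℝ) = ((j : ℝ) + 1) ^ 2 := by push_cast; ring
    calc V μ T ((j + 1) ^ 2) / (ε * ((j : ℝ) + 1) ^ 2) ^ 2
        ≤ (((j + 1) ^ 2 : ℕ) : ℝ) * L ^ 2 / (ε * ((j : ℝ) + 1) ^ 2) ^ 2 := by gcongr
      _ = (L ^ 2 / ε ^ 2) * (1 / ((j : ℝ) + 1) ^ 2) := by
          rw [hcast]; field_simp
  have hsummable : Summable (fun j : ℕ => (L ^ 2 / ε ^ 2) * (1 / ((j : ℝ) + 1) ^ 2)) := by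
    apply Summable.mul_left
    have h2 : Summable (fun n : ℕ => 1 / (n : ℝ) ^ 2) :=
      (Real.summable_one_div_nat_pow).2 one_lt_two
    have h3 := (summable_nat_add_iff 1).2 h2
    refine h3.congr fun j => ?_
    push_cast
    ring
  have htsum : (∑' j, μ (s j)) ≠ ⊤ := by
    refine ne_of_lt (lt_of_le_of_lt (ENNReal.tsum_le_tsum hbound) ?_)
    rw [← ENNReal.ofReal_tsum_of_nonneg (fun j => by positivity) hsummable]
    exact ENNReal.ofReal_lt_top
  refine (ae_eventually_notMem htsum).mono fun x hx => hx.mono fun j hj => hj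

/-- Purely deterministic assembly of the subsequence estimates. -/
lemma deterministic (L : ℝ) (hL : 0 < L) (G : ℕ → ℝ) (hG0 : G 0 = 0)
    (hstep : ∀ m n : ℕ, m ≤ n → |G n - G m| ≤ ((n - m : ℕ) : ℝ) * L)
    (hsub : ∀ k : ℕ, ∀ᶠ j : ℕ in atTop,
      |G ((j + 1) ^ 2)| < (1 / ((k : ℝ) + 1)) * ((j : ℝ) + 1) ^ 2) :
    Tendsto (fun n : ℕ => (1 / (n : ℝ)) * G n) atTop (nhds 0) := by
  rw [Metric.tendsto_atTop]
  intro ε hε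
  obtain ⟨k, hk⟩ := exists_nat_one_div_lt (half_pos hε)
  obtain ⟨j₀, hj₀⟩ := eventually_atTop.1 (hsub k)
  obtain ⟨S, hS⟩ := exists_nat_gt (4 * L / ε)
  set m := max (j₀ + 1) (S + 1) with hm
  refine ⟨m * m, fun n hn => ?_⟩
  set s := Nat.sqrt n with hs
  have hj₀m : j₀ + 1 ≤ m := le_max_left _ _
  have hSm : S + 1 ≤ m := le_max_right _ _
  have hms : m ≤ s := Nat.le_sqrt.2 hn
  have hs1 : 1 ≤ s := by omega
  have hsn : s * s ≤ n := by have h := Nat.sqrt_le' n; rw [pow_two] at h; exact h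
  have hns : n < s * s + 2 * s + 1 := by
    have h : n < (s + 1) * (s + 1) := by
      simpa [Nat.succ_eq_add_one, hs] using Nat.lt_succ_sqrt n
    have e : (s + 1) * (s + 1) = s * s + 2 * s + 1 := by ring
    omega
  have hj : j₀ ≤ s - 1 := by omega
  have hGs := hj₀ (s - 1) hj
  have hsrw : (s - 1) + 1 = s := by omega
  rw [hsrw] at hGs
  have hsR : (1 : ℝ) ≤ (s : ℝ) := by exact_mod_cast hs1
  have hs2n : ((s : ℝ)) * (s : ℝ) ≤ (n : ℝ) := by exact_mod_cast hsn
  have hn1 : (1 : ℝ) ≤ (n : ℝ) := le_trans (by nlinarith) hs2n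
  have hnpos : (0 : ℝ) < n := by linarith
  have hdiff := hstep (s ^ 2) n (by rw [pow_two]; exact hsn)
  have hcnt : ((n - s ^ 2 : ℕ) : ℝ) ≤ 2 * (s : ℝ) := by
    have h : n - s ^ 2 ≤ 2 * s := by rw [pow_two]; omega
    calc ((n - s ^ 2 : ℕ) : ℝ) ≤ ((2 * s : ℕ) : ℝ) := by exact_mod_cast h
      _ = 2 * (s : ℝ) := by push_cast; ring
  have hGsR : |G (s ^ 2)| < (1 / ((k : ℝ) + 1)) * (s : ℝ) ^ 2 := by
    have hc : ((s - 1 : ℕ) : ℝ) + 1 = (s : ℝ) := by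
      have : ((s - 1 : ℕ) : ℝ) = (s : ℝ) - 1 := by
        rw [Nat.cast_sub hs1]; simp
      rw [this]; ring
    rwa [hc] at hGs
  have hkpos : (0 : ℝ) < 1 / ((k : ℝ) + 1) := by positivity
  have h4L : 4 * L < ε * (s : ℝ) := by
    have h1 : 4 * L < ε * S := by
      rw [div_lt_iff₀ hε] at hS; linarith [hS]
    have h2 : (S : ℝ) < (s : ℝ) := by
      have : S + 1 ≤ s := le_trans (le_max_right _ _) hms
      exact_mod_cast by omega
    nlinarith
  have key : |G n| < ε * (n : ℝ) := by
    have h1 : |G n| ≤ |G (s ^ 2)| + ((n - s ^ 2 : ℕ) : ℝ) * L := by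
      calc |G n| = |(G n - G (s ^ 2)) + G (s ^ 2)| := by ring_nf
        _ ≤ |G n - G (s ^ 2)| + |G (s ^ 2)| := abs_add_le _ _
        _ ≤ ((n - s ^ 2 : ℕ) : ℝ) * L + |G (s ^ 2)| := by linarith [hdiff]
        _ = |G (s ^ 2)| + ((n - s ^ 2 : ℕ) : ℝ) * L := by ring
    have e1 : |G n| < (1 / ((k : ℝ) + 1)) * (s : ℝ) ^ 2 + 2 * (s : ℝ) * L := by
      have := mul_le_mul_of_nonneg_right hcnt hL.le
      calc |G n| ≤ |G (s ^ 2)| + ((n - s ^ 2 : ℕ) : ℝ) * L := h1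
        _ < (1 / ((k : ℝ) + 1)) * (s : ℝ) ^ 2 + ((n - s ^ 2 : ℕ) : ℝ) * L := by
            linarith [hGsR]
        _ ≤ (1 / ((k : ℝ) + 1)) * (s : ℝ) ^ 2 + 2 * (s : ℝ) * L := by linarith
    have e2 : (1 / ((k : ℝ) + 1)) * (s : ℝ) ^ 2 ≤ (ε / 2) * (n : ℝ) := by
      have hss : (s : ℝ) ^ 2 ≤ (n : ℝ) := by rw [sq]; exact hs2n
      nlinarith [sq_nonneg (s : ℝ)]
    have e3 : 2 * (s : ℝ) * L < (ε / 2) * (n : ℝ) := by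
      have hss : (s : ℝ) ^ 2 ≤ (n : ℝ) := by rw [sq]; exact hs2n
      nlinarith [hsR, h4L, hε]
    linarith
  rw [Real.dist_eq, sub_zero]
  have habs : |1 / (n : ℝ) * G n| = |G n| / n := by
    rw [abs_mul, abs_of_nonneg (by positivity : (0 : ℝ) ≤ 1 / (n : ℝ))]
    ring
  rw [habs, div_lt_iff₀ hnpos]
  linarith

end Final


end TreeLLN

/-- For a `δ`-regular tree of cubes `R*` with root `[0,1)^d` and a Borel
probability measure `μ` on `[0,1)^d`, for `μ`-a.e. `x`,
`(1/n)·(log(1/ℓ(R_n(x))) − Σ_{i<n} λ(R_i(x))) → 0`. -/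
theorem tree_lyapunov_lln (d : ℕ) (hd : 1 ≤ d) (δ : ℝ) (hδ : 0 < δ)
    (T : CubeTree d δ) (μ : Measure (EuclideanSpace ℝ (Fin d))) [IsProbabilityMeasure μ]
    (hsupp : μ (unitCube d) = 1) :
    ∀ᵐ x ∂μ, Filter.Tendsto (fun n : ℕ =>
      (1 / (n : ℝ)) * (Real.log (1 / T.side n x)
        - ∑ i ∈ Finset.range n, treeLyap μ T i x))
      Filter.atTop (nhds 0) := by
  have hae1 : ∀ᵐ x ∂μ, x ∈ unitCube d := by
    rw [ae_iff]
    exact TreeLLN.compl_null μ hsupp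
  have hae2 : ∀ᵐ x ∂μ, ∀ k : ℕ, ∀ᶠ j : ℕ in Filter.atTop,
      ¬(x ∈ unitCube d ∧
        (1 / ((k : ℝ) + 1)) * ((j : ℝ) + 1) ^ 2 ≤ |TreeLLN.Gf μ T ((j + 1) ^ 2) x|) :=
    ae_all_iff.2 fun k => TreeLLN.bc T μ hδ hsupp k
  filter_upwards [hae1, hae2] with x hxU hx
  have hδ1 : δ < 1 := by linarith [TreeLLN.delta_le_half T]
  have hL : 0 < Real.log (1 / δ) := Real.log_pos (by rw [lt_div_iff₀ hδ]; linarith)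
  have hsub : ∀ k : ℕ, ∀ᶠ j : ℕ in Filter.atTop,
      |TreeLLN.Gf μ T ((j + 1) ^ 2) x| < (1 / ((k : ℝ) + 1)) * ((j : ℝ) + 1) ^ 2 := by
    intro k
    filter_upwards [hx k] with j hj
    exact not_le.1 (not_and.1 hj hxU)
  exact TreeLLN.deterministic (Real.log (1 / δ)) hL (fun n => TreeLLN.Gf μ T n x)
    (TreeLLN.Gf_zero μ hxU)
    (fun m n hmn => TreeLLN.Gf_diff_bound (T := T) hδ μ hsupp hxU hmn) hsub
end

section
/- Let d, k ≥ 1 be integers, N = (2^d−1)·k + 1, and let (α_1,…,α_N) be the vector consisting of 2^{-1} repeated 2^d−1 times, then 2^{-2} repeated 2^d−1 times, …, then 2^{-(k-1)} repeated 2^d−1 times, and finally 2^{-k} repeated 2^d times. For ε ∈ [0, 2^{-kd}], the supremum of ( Σ_{i=1}^N p_i·log(1/p_i) ) / ( Σ_{i=1}^N p_i·log(1/α_i) ) over all probability vectors (p_1,…,p_N) (p_i ≥ 0, Σ p_i = 1) satisfying p_N ≤ ε equals s_{d,k}(ε), and this supremum is attained. -/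
open MeasureTheory Filter Metric Set
open scoped ENNReal NNReal

/-- `s_{d,k}(ε)`: the largest real solution `s` of
`(1−ε)·log((2^d−1)·(Σ_{i=1}^k 2^{-s·i})/(1−ε)) + ε·log(1/ε) = s·ε·log(2^k)`
(with the convention `0·log 0 = 0`). -/
noncomputable def sdk (d k : ℕ) (ε : ℝ) : ℝ :=
  sSup {s : ℝ |
    (1 - ε) * Real.log (((2 : ℝ) ^ d - 1) *
        (∑ i ∈ Finset.range k, (2 : ℝ) ^ (-(s * ((i : ℝ) + 1)))) / (1 - ε))
      + ε * Real.log (1 / ε) = s * ε * Real.log ((2 : ℝ) ^ k)}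

/-- `t_{d,k}(ε) = d − s_{d,k}(ε)`. -/
noncomputable def tdk (d k : ℕ) (ε : ℝ) : ℝ := d - sdk d k ε

/-- The exponent of the `i`-th entry (0-indexed) of the vector `(α_1,…,α_N)`:
the entries are `2^{-1}` repeated `2^d−1` times, …, `2^{-(k-1)}` repeated `2^d−1` times,
and `2^{-k}` repeated `2^d` times, so `α_i = 2^{-expo d k i}`. -/
def expo (d k : ℕ) (i : ℕ) : ℕ := min (i / (2 ^ d - 1) + 1) k


section AuxEntropy
open Real Finset

noncomputable def Afun (d k : ℕ) (s : ℝ) : ℝ :=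
  ((2 : ℝ) ^ d - 1) * ∑ i ∈ Finset.range k, (2 : ℝ) ^ (-(s * ((i : ℝ) + 1)))

noncomputable def Ffun (d k : ℕ) (ε : ℝ) (s : ℝ) : ℝ :=
  (1 - ε) * Real.log (Afun d k s / (1 - ε)) + ε * Real.log (1/ε) - s * ε * Real.log ((2:ℝ)^k)

/-- Gibbs' inequality. -/
lemma gibbs {ι : Type*} (S : Finset ι) (p q : ι → ℝ)
    (hp : ∀ i ∈ S, 0 ≤ p i) (hq : ∀ i ∈ S, 0 < q i)
    (hps : ∑ i ∈ S, p i = 1) :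
    ∑ i ∈ S, (Real.negMulLog (p i) + p i * Real.log (q i)) ≤ Real.log (∑ i ∈ S, q i) := by
  set c := ∑ i ∈ S, q i with hc
  have hS : S.Nonempty := by
    rcases S.eq_empty_or_nonempty with h | h
    · simp [h] at hps
    · exact h
  have hcpos : 0 < c := Finset.sum_pos hq hS
  have key : ∀ i ∈ S, Real.negMulLog (p i) + p i * Real.log (q i) - p i * Real.log c
      ≤ q i / c - p i := by
    intro i hi
    rcases eq_or_lt_of_le (hp i hi) with h0 | h0
    · simp [← h0]
      exact div_nonneg (hq i hi).le hcpos.le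
    · have hqi := hq i hi
      have hlog : Real.log (q i / (c * p i)) ≤ q i / (c * p i) - 1 :=
        Real.log_le_sub_one_of_pos (by positivity)
      have hrw : Real.log (q i / (c * p i)) = Real.log (q i) - Real.log c - Real.log (p i) := by
        rw [Real.log_div (ne_of_gt hqi) (by positivity), Real.log_mul (ne_of_gt hcpos) (ne_of_gt h0)]
        ring
      have := mul_le_mul_of_nonneg_left hlog (le_of_lt h0)
      rw [hrw] at this
      have hne : p i ≠ 0 := ne_of_gt h0
      have h2 : p i * (q i / (c * p i) - 1) = q i / c - p i := by
        field_simp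
      rw [h2] at this
      simp only [Real.negMulLog]
      nlinarith [this]
  have hsum := Finset.sum_le_sum key
  rw [Finset.sum_sub_distrib, ← Finset.sum_mul, hps, Finset.sum_sub_distrib, ← Finset.sum_div, ← hc] at hsum
  have : c / c = 1 := div_self (ne_of_gt hcpos)
  linarith [hsum, this.ge, this.le]

/-- Two-point bound. -/
lemma two_point (A B ε t : ℝ) (hA : 0 < A) (hB : 0 < B) (hε : 0 < ε) (hε1 : ε < 1)
    (ht0 : 0 ≤ t) (ht : t ≤ ε) (hcond : ε * (A + B) ≤ B)
    (heq : (1 - ε) * Real.log (A / (1 - ε)) + ε * Real.log (B / ε) = 0) :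
    (1 - t) * Real.log (A / (1 - t)) + t * Real.log (B / t) ≤ 0 := by
  set lam := A / (1 - ε) with hlam
  set mu := B / ε with hmu
  have hlampos : 0 < lam := div_pos hA (by linarith)
  have hmupos : 0 < mu := div_pos hB hε
  have hlammu : lam ≤ mu := by
    rw [hlam, hmu, div_le_div_iff₀ (by linarith) hε]
    nlinarith
  have hloglm : Real.log lam ≤ Real.log mu := Real.log_le_log hlampos hlammu
  rcases eq_or_lt_of_le ht0 with h0 | h0
  · -- t = 0
    subst h0
    simp only [sub_zero, one_mul, zero_mul, add_zero, div_one]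
    -- need log A ≤ 0; from heq, log lam ≤ 0
    have hlamle : Real.log lam ≤ 0 := by
      by_contra h
      push_neg at h
      nlinarith [heq, hloglm]
    have : A ≤ 1 - ε := by
      by_contra h
      push_neg at h
      have : 1 < lam := by rw [hlam]; rw [lt_div_iff₀ (by linarith)]; linarith
      nlinarith [Real.log_pos this]
    exact Real.log_nonpos hA.le (by linarith)
  · have h1t : 0 < 1 - t := by linarith
    have e1 : Real.log (A / (1 - t)) = Real.log (A / ((1 - t) * lam)) + Real.log lam := by
      rw [← Real.log_mul (by positivity) (ne_of_gt hlampos)]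
      congr 1
      field_simp
    have e2 : Real.log (B / t) = Real.log (B / (t * mu)) + Real.log mu := by
      rw [← Real.log_mul (by positivity) (ne_of_gt hmupos)]
      congr 1
      field_simp
    have b1 : Real.log (A / ((1 - t) * lam)) ≤ A / ((1 - t) * lam) - 1 :=
      Real.log_le_sub_one_of_pos (by positivity)
    have b2 : Real.log (B / (t * mu)) ≤ B / (t * mu) - 1 :=
      Real.log_le_sub_one_of_pos (by positivity)
    have c1 : (1 - t) * (A / ((1 - t) * lam) - 1) = A / lam - (1 - t) := by
      field_simp
    have c2 : t * (B / (t * mu) - 1) = B / mu - t := by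
      field_simp
    have dA : A / lam = 1 - ε := by rw [hlam]; field_simp
    have dB : B / mu = ε := by rw [hmu]; field_simp
    have : (1 - t) * Real.log (A / (1 - t)) + t * Real.log (B / t)
        ≤ (1 - ε) * Real.log lam + ε * Real.log mu + (ε - t) * (Real.log lam - Real.log mu) := by
      rw [e1, e2]
      have b1' := mul_le_mul_of_nonneg_left b1 h1t.le
      have b2' := mul_le_mul_of_nonneg_left b2 h0.le
      rw [c1] at b1'
      rw [c2] at b2'
      rw [dA] at b1'
      rw [dB] at b2'
      nlinarith
    have heq' : (1 - ε) * Real.log lam + ε * Real.log mu = 0 := heq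
    nlinarith [mul_nonneg (sub_nonneg.mpr ht) (sub_nonneg.mpr hloglm)]

lemma two_pow_d_big {d : ℕ} (hd : 1 ≤ d) : (2 : ℝ) ≤ (2 : ℝ) ^ d := by
  calc (2:ℝ) = 2 ^ 1 := (pow_one 2).symm
  _ ≤ 2 ^ d := pow_le_pow_right₀ one_le_two hd

lemma Afun_pos {d k : ℕ} (hd : 1 ≤ d) (hk : 1 ≤ k) (s : ℝ) : 0 < Afun d k s := by
  apply mul_pos (by linarith [two_pow_d_big hd])
  apply Finset.sum_pos (fun i _ => Real.rpow_pos_of_pos (by norm_num) _)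
  exact Finset.nonempty_range_iff.mpr (by omega)

lemma Afun_strictAnti {d k : ℕ} (hd : 1 ≤ d) (hk : 1 ≤ k) : StrictAnti (Afun d k) := by
  intro a b hab
  apply mul_lt_mul_of_pos_left _ (by linarith [two_pow_d_big hd])
  apply Finset.sum_lt_sum_of_nonempty (Finset.nonempty_range_iff.mpr (by omega))
  intro i _
  rw [Real.rpow_lt_rpow_left_iff (by norm_num)]
  have : (0:ℝ) < (i:ℝ) + 1 := by positivity
  nlinarith

lemma Afun_continuous (d k : ℕ) : Continuous (Afun d k) := by
  apply Continuous.mul continuous_const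
  apply continuous_finset_sum
  intro i _
  have : (fun s : ℝ => (2:ℝ) ^ (-(s * ((i : ℝ) + 1)))) =
      fun s : ℝ => Real.exp (Real.log 2 * (-(s * ((i : ℝ) + 1)))) := by
    funext s
    rw [Real.rpow_def_of_pos (by norm_num), mul_comm]
  rw [this]
  fun_prop

lemma geom_aux (x : ℝ) (hx : x ≠ 0) (k : ℕ) :
    (x - 1) * ∑ i ∈ Finset.range k, (x⁻¹) ^ (i + 1) = 1 - (x⁻¹) ^ k := by
  induction k with
  | zero => simp
  | succ n ih =>
    rw [Finset.sum_range_succ, mul_add, ih]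
    field_simp
    rw [pow_succ]
    field_simp
    ring

lemma Afun_at_d {d k : ℕ} (hd : 1 ≤ d) : Afun d k d = 1 - ((2 : ℝ) ^ (k * d))⁻¹ := by
  have h2d : (0:ℝ) < (2:ℝ)^d := by positivity
  have hterm : ∀ i ∈ Finset.range k,
      (2 : ℝ) ^ (-((d:ℝ) * ((i : ℝ) + 1))) = (((2:ℝ)^d)⁻¹) ^ (i + 1) := by
    intro i _
    rw [show -((d:ℝ) * ((i : ℝ) + 1)) = -((d * (i+1) : ℕ) : ℝ) by push_cast; ring,
      Real.rpow_neg (by norm_num), Real.rpow_natCast, pow_mul, inv_pow]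
  rw [Afun, Finset.sum_congr rfl hterm, geom_aux _ (by positivity), ← inv_pow, ← pow_mul,
    mul_comm d k, inv_pow]

section
variable {d k : ℕ} {ε : ℝ} (hd : 1 ≤ d) (hk : 1 ≤ k) (hε0 : 0 ≤ ε)
  (hε : ε ≤ ((2 : ℝ) ^ (k * d))⁻¹)

include hd hk hε0 hε

lemma eps_le_half : ε ≤ 1/2 := by
  have h1 : (2:ℝ) ≤ (2:ℝ)^(k*d) := by
    calc (2:ℝ) = 2^1 := (pow_one 2).symm
    _ ≤ 2^(k*d) := pow_le_pow_right₀ one_le_two (by nlinarith)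
  have h2 : ((2:ℝ)^(k*d))⁻¹ ≤ 1/2 := by
    rw [inv_le_comm₀ (by positivity) (by norm_num)]
    linarith
  linarith

lemma one_sub_eps_pos : 0 < 1 - ε := by
  have := eps_le_half hd hk hε0 hε; linarith

lemma Ffun_strictAnti : StrictAnti (Ffun d k ε) := by
  intro a b hab
  have h1e := one_sub_eps_pos hd hk hε0 hε
  have hAab : Afun d k b < Afun d k a := Afun_strictAnti hd hk hab
  have hApos := Afun_pos hd hk (d := d) (k := k) b
  have hlog : Real.log (Afun d k b / (1-ε)) < Real.log (Afun d k a / (1-ε)) :=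
    Real.log_lt_log (div_pos hApos h1e) ((div_lt_div_iff_of_pos_right h1e).mpr hAab)
  have hlogk : 0 ≤ Real.log ((2:ℝ)^k) := Real.log_nonneg (one_le_pow₀ one_le_two)
  have : a * ε * Real.log ((2:ℝ)^k) ≤ b * ε * Real.log ((2:ℝ)^k) := by
    apply mul_le_mul_of_nonneg_right _ hlogk
    nlinarith
  simp only [Ffun]
  nlinarith

lemma Ffun_continuous : Continuous (Ffun d k ε) := by
  have h1e := one_sub_eps_pos hd hk hε0 hε
  apply Continuous.sub
  · apply Continuous.add _ continuous_const
    apply Continuous.mul continuous_const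
    apply Continuous.log
    · exact (Afun_continuous d k).div_const _
    · intro x
      have h := Afun_pos hd hk (d := d) (k := k) x
      exact ne_of_gt (div_pos h h1e)
  · fun_prop

lemma Ffun_at_d_nonpos : Ffun d k ε ((d : ℝ)) ≤ 0 := by
  have h1e := one_sub_eps_pos hd hk hε0 hε
  set a : ℝ := ((2:ℝ)^(k*d))⁻¹ with ha
  have hapos : 0 < a := by positivity
  have ha1 : a < 1 := by
    rw [ha, inv_lt_one_iff₀]
    right
    calc (1:ℝ) < 2^1 := by norm_num
    _ ≤ 2^(k*d) := pow_le_pow_right₀ one_le_two (by nlinarith)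
  have hdlog : (d:ℝ) * Real.log ((2:ℝ)^k) = Real.log ((2:ℝ)^(k*d)) := by
    rw [← Real.log_pow, ← pow_mul, mul_comm k d]
  have hterm1 : (1-ε) * Real.log ((1-a)/(1-ε)) ≤ ε - a := by
    have := Real.log_le_sub_one_of_pos (div_pos (show (0:ℝ) < 1 - a by linarith) h1e)
    have h2 := mul_le_mul_of_nonneg_left this h1e.le
    have : (1-ε) * ((1-a)/(1-ε) - 1) = ε - a := by field_simp; ring
    linarith [this ▸ h2]
  have key : Ffun d k ε d = (1-ε) * Real.log ((1-a)/(1-ε)) + (ε * Real.log (1/ε) - (d:ℝ)*ε*Real.log ((2:ℝ)^k)) := by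
    rw [Ffun, Afun_at_d hd, ← ha]
    ring
  rcases eq_or_lt_of_le hε0 with h0 | h0
  · rw [key, ← h0]
    have hle : Real.log (1 - a) ≤ 0 := Real.log_nonpos (by linarith) (by linarith)
    simpa using hle
  · have hterm2 : ε * Real.log (1/ε) - (d:ℝ)*ε*Real.log ((2:ℝ)^k) ≤ a - ε := by
      have hrw : ε * Real.log (1/ε) - (d:ℝ)*ε*Real.log ((2:ℝ)^k) = ε * Real.log (a/ε) := by
        rw [show (d:ℝ)*ε*Real.log ((2:ℝ)^k) = ε * ((d:ℝ)*Real.log ((2:ℝ)^k)) by ring, hdlog,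
          ← mul_sub]
        congr 1
        rw [Real.log_div (ne_of_gt hapos) (ne_of_gt h0), ha, Real.log_inv, one_div, Real.log_inv]
        ring
      rw [hrw]
      have := Real.log_le_sub_one_of_pos (show (0:ℝ) < a/ε by positivity)
      have h2 := mul_le_mul_of_nonneg_left this h0.le
      have : ε * (a/ε - 1) = a - ε := by field_simp
      linarith [this ▸ h2]
    rw [key]
    linarith

lemma Ffun_exists_nonneg : ∃ s : ℝ, s ≤ (d:ℝ) ∧ 0 ≤ Ffun d k ε s := by
  have h1e := one_sub_eps_pos hd hk hε0 hε
  have hlogk : 0 ≤ Real.log ((2:ℝ)^k) := Real.log_nonneg (one_le_pow₀ one_le_two)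
  set m : ℝ := (1-ε) * Real.log 2 + ε * Real.log ((2:ℝ)^k) with hm
  have hmpos : 0 < m := by
    have : 0 < Real.log 2 := Real.log_pos (by norm_num)
    have : 0 < (1-ε) * Real.log 2 := by positivity
    nlinarith [mul_nonneg hε0 hlogk]
  set C : ℝ := (1-ε) * (- Real.log (1-ε)) + ε * Real.log (1/ε) with hC
  have hbound : ∀ s : ℝ, C - s * m ≤ Ffun d k ε s := by
    intro s
    have hApos := Afun_pos hd hk (d := d) (k := k) s
    have hge : (2:ℝ)^(-s) ≤ Afun d k s := by
      have h1 : -(s * (((0:ℕ):ℝ) + 1)) = -s := by norm_num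
      calc (2:ℝ)^(-s) = 1 * (2:ℝ)^(-(s * (((0:ℕ):ℝ) + 1))) := by rw [h1, one_mul]
      _ ≤ ((2:ℝ)^d - 1) * ∑ i ∈ Finset.range k, (2 : ℝ) ^ (-(s * ((i : ℝ) + 1))) := by
          apply mul_le_mul
          · linarith [two_pow_d_big hd]
          · apply Finset.single_le_sum (f := fun i : ℕ => (2:ℝ)^(-(s * ((i : ℝ) + 1))))
              (fun i _ => (Real.rpow_pos_of_pos (by norm_num) _).le)
            exact Finset.mem_range.mpr (by omega)
          · positivity
          · linarith [two_pow_d_big hd]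
      _ = Afun d k s := rfl
    have hrp : (0:ℝ) < (2:ℝ)^(-s) := Real.rpow_pos_of_pos (by norm_num) _
    have hlog : Real.log ((2:ℝ)^(-s)/(1-ε)) ≤ Real.log (Afun d k s / (1-ε)) :=
      Real.log_le_log (div_pos hrp h1e) ((div_le_div_iff_of_pos_right h1e).mpr hge)
    have hlogval : Real.log ((2:ℝ)^(-s)/(1-ε)) = -s * Real.log 2 - Real.log (1-ε) := by
      rw [Real.log_div (ne_of_gt hrp) (ne_of_gt h1e), Real.log_rpow (by norm_num)]
    have hmul := mul_le_mul_of_nonneg_left hlog h1e.le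
    rw [hlogval] at hmul
    simp only [Ffun, hm, hC]
    nlinarith [hmul]
  refine ⟨min (C/m) d, min_le_right _ _, ?_⟩
  calc (0:ℝ) ≤ C - (min (C/m) d) * m := by
        have : min (C/m) d ≤ C/m := min_le_left _ _
        have := mul_le_mul_of_nonneg_right this hmpos.le
        rw [div_mul_cancel₀ _ (ne_of_gt hmpos)] at this
        linarith
  _ ≤ Ffun d k ε _ := hbound _

end

section
variable {d k : ℕ} {ε : ℝ} (hd : 1 ≤ d) (hk : 1 ≤ k) (hε0 : 0 ≤ ε)
  (hε : ε ≤ ((2 : ℝ) ^ (k * d))⁻¹)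

include hd hk hε0 hε

lemma exists_root : ∃ s : ℝ, s ≤ (d:ℝ) ∧ Ffun d k ε s = 0 := by
  obtain ⟨s1, hs1d, hs1⟩ := Ffun_exists_nonneg hd hk hε0 hε
  have hsub : Set.Icc (Ffun d k ε d) (Ffun d k ε s1) ⊆ Ffun d k ε '' Set.Icc s1 d :=
    intermediate_value_Icc' hs1d (Ffun_continuous hd hk hε0 hε).continuousOn
  have h0 : (0:ℝ) ∈ Set.Icc (Ffun d k ε d) (Ffun d k ε s1) :=
    ⟨Ffun_at_d_nonpos hd hk hε0 hε, hs1⟩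
  obtain ⟨s, hs, hFs⟩ := hsub h0
  exact ⟨s, hs.2, hFs⟩

lemma sdk_eq_of_root {s₀ : ℝ} (hroot : Ffun d k ε s₀ = 0) : sdk d k ε = s₀ := by
  have hset : {s : ℝ |
      (1 - ε) * Real.log (((2 : ℝ) ^ d - 1) *
          (∑ i ∈ Finset.range k, (2 : ℝ) ^ (-(s * ((i : ℝ) + 1)))) / (1 - ε))
        + ε * Real.log (1 / ε) = s * ε * Real.log ((2 : ℝ) ^ k)} = {s₀} := by
    ext s
    simp only [Set.mem_setOf_eq, Set.mem_singleton_iff]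
    constructor
    · intro h
      apply (Ffun_strictAnti hd hk hε0 hε).injective
      rw [hroot]
      simp only [Ffun, Afun]
      linarith
    · rintro rfl
      have h := hroot
      simp only [Ffun, Afun] at h
      linarith
  rw [sdk, hset, csSup_singleton]

lemma sdk_props : Ffun d k ε (sdk d k ε) = 0 ∧ sdk d k ε ≤ (d:ℝ) := by
  obtain ⟨s₀, hs₀d, hroot⟩ := exists_root hd hk hε0 hε
  rw [sdk_eq_of_root hd hk hε0 hε hroot]
  exact ⟨hroot, hs₀d⟩

end

lemma sum_blocks (n k : ℕ) (hn : 0 < n) (f : ℕ → ℝ) :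
    ∑ i ∈ Finset.range (n * k), f (i / n + 1) = n * ∑ j ∈ Finset.range k, f (j + 1) := by
  induction k with
  | zero => simp
  | succ m ih =>
    rw [Nat.mul_succ, Finset.sum_range_add, ih, Finset.sum_range_succ]
    have : ∀ i ∈ Finset.range n, f ((n * m + i) / n + 1) = f (m + 1) := by
      intro i hi
      rw [Finset.mem_range] at hi
      rw [Nat.mul_add_div hn, Nat.div_eq_of_lt hi]
    rw [Finset.sum_congr rfl this, Finset.sum_const, Finset.card_range, nsmul_eq_mul]
    ring

lemma expo_of_lt {d k : ℕ} (hd : 1 ≤ d) {j : ℕ} (hj : j < (2^d - 1) * k) :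
    expo d k j = j / (2^d - 1) + 1 := by
  have hn : 0 < 2^d - 1 := by
    have : 2 ≤ 2^d := by calc 2 = 2^1 := rfl
                          _ ≤ 2^d := Nat.pow_le_pow_right (by norm_num) hd
    omega
  have : j / (2^d - 1) < k := (Nat.div_lt_iff_lt_mul hn).mpr (by rwa [mul_comm] at hj)
  exact min_eq_left (by omega)

lemma expo_last {d k : ℕ} (hd : 1 ≤ d) (hk : 1 ≤ k) : expo d k ((2^d - 1) * k) = k := by
  have hn : 0 < 2^d - 1 := by
    have : 2 ≤ 2^d := by calc 2 = 2^1 := rfl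
                          _ ≤ 2^d := Nat.pow_le_pow_right (by norm_num) hd
    omega
  rw [expo, Nat.mul_div_cancel_left k hn]
  omega

lemma expo_ge_one (d k : ℕ) (hk : 1 ≤ k) (i : ℕ) : 1 ≤ expo d k i :=
  le_min (Nat.succ_le_succ (Nat.zero_le _)) hk

lemma negMulLog_div_mul (x m : ℝ) (hm : 0 < m) :
    m * Real.negMulLog (x / m) = Real.negMulLog x + x * Real.log m := by
  rcases eq_or_ne x 0 with rfl | hx
  · simp
  · rw [Real.negMulLog, Real.negMulLog, Real.log_div hx (ne_of_gt hm)]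
    field_simp
    ring

lemma log_one_div_rpow (e : ℝ) : Real.log (1 / (2:ℝ) ^ (-e)) = e * Real.log 2 := by
  rw [one_div, ← Real.rpow_neg (by norm_num : (0:ℝ) ≤ 2), neg_neg, Real.log_rpow (by norm_num)]

lemma log_rpow_neg (e : ℝ) : Real.log ((2:ℝ) ^ (-e)) = -(e * Real.log 2) := by
  rw [Real.log_rpow (by norm_num : (0:ℝ) < 2)]
  ring

end AuxEntropy

set_option maxHeartbeats 1000000 in
/-- For `d, k ≥ 1`, `N = (2^d−1)·k + 1` and `ε ∈ [0, 2^{-kd}]`, the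
supremum of `(Σ p_i·log(1/p_i)) / (Σ p_i·log(1/α_i))` over probability vectors
`(p_1,…,p_N)` with `p_N ≤ ε` equals `s_{d,k}(ε)`, and it is attained. -/
theorem isGreatest_entropy_ratio (d k : ℕ) (hd : 1 ≤ d) (hk : 1 ≤ k) (ε : ℝ)
    (hε0 : 0 ≤ ε) (hε : ε ≤ ((2 : ℝ) ^ (k * d))⁻¹) :
    IsGreatest
      {v : ℝ | ∃ p : Fin ((2 ^ d - 1) * k + 1) → ℝ,
        (∀ i, 0 ≤ p i) ∧ (∑ i, p i) = 1 ∧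
        p ⟨(2 ^ d - 1) * k, Nat.lt_succ_self _⟩ ≤ ε ∧
        v = (∑ i, Real.negMulLog (p i)) /
            (∑ i, p i * Real.log (1 / (2 : ℝ) ^ (-(expo d k (i : ℕ) : ℝ))))}
      (sdk d k ε) := by

  obtain ⟨hFs, hsd⟩ := sdk_props hd hk hε0 hε
  set s : ℝ := sdk d k ε with hs
  have h1e : 0 < 1 - ε := one_sub_eps_pos hd hk hε0 hε
  set n : ℕ := 2 ^ d - 1 with hn
  have hn0 : 0 < n := by
    have : 2 ≤ 2^d := by
      calc 2 = 2^1 := rfl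
      _ ≤ 2^d := Nat.pow_le_pow_right (by norm_num) hd
    omega
  set N : ℕ := n * k + 1 with hN
  have hApos : 0 < Afun d k s := Afun_pos hd hk s
  set A : ℝ := Afun d k s with hA
  set q : ℕ → ℝ := fun e => (2:ℝ) ^ (-(s * (e:ℝ))) with hq
  have hqpos : ∀ e : ℕ, 0 < q e := fun e => Real.rpow_pos_of_pos (by norm_num) _
  have hnR : ((n:ℕ):ℝ) = (2:ℝ)^d - 1 := by
    rw [hn, Nat.cast_sub (Nat.one_le_two_pow)]
    push_cast
    ring
  -- sum of q over the first n*k indices is A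
  have hsumq : ∑ j ∈ Finset.range (n * k), q (expo d k j) = A := by
    have h1 : ∀ j ∈ Finset.range (n * k), q (expo d k j) = q (j / n + 1) := by
      intro j hj
      rw [expo_of_lt hd (Finset.mem_range.mp hj)]
    rw [Finset.sum_congr rfl h1, sum_blocks n k hn0 q, hA, Afun, hnR]
    congr 1
    apply Finset.sum_congr rfl
    intro j _
    rw [hq]
    push_cast
    ring_nf
  -- log of q
  have hlogq : ∀ e : ℕ, Real.log (q e) = -(s * (e:ℝ) * Real.log 2) := by
    intro e
    rw [hq]
    simp only
    rw [log_rpow_neg]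
  set B : ℝ := q k with hB
  have hBpos : 0 < B := hqpos k
  -- denominator manipulation for a generic p
  have denom_eq : ∀ p : Fin N → ℝ,
      (∑ i, p i * Real.log (1 / (2 : ℝ) ^ (-(expo d k (i : ℕ) : ℝ))))
        = (∑ i, p i * (expo d k (i : ℕ) : ℝ)) * Real.log 2 := by
    intro p
    rw [Finset.sum_mul]
    apply Finset.sum_congr rfl
    intro i _
    rw [log_one_div_rpow]
    ring
  have denom_ge : ∀ p : Fin N → ℝ, (∀ i, 0 ≤ p i) → (∑ i, p i) = 1 →
      1 ≤ ∑ i, p i * (expo d k (i : ℕ) : ℝ) := by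
    intro p hp hsum
    calc (1:ℝ) = ∑ i, p i := hsum.symm
    _ ≤ ∑ i, p i * (expo d k (i : ℕ) : ℝ) := by
        apply Finset.sum_le_sum
        intro i _
        exact le_mul_of_one_le_right (hp i) (by exact_mod_cast expo_ge_one d k hk _)
  have hlog2pos : (0:ℝ) < Real.log 2 := Real.log_pos (by norm_num)
  -- key fact: ε ≤ B
  have hεB : ε ≤ B := by
    have h1 : ((2:ℝ) ^ (k*d))⁻¹ = (2:ℝ) ^ (-((d:ℝ) * (k:ℝ))) := by
      rw [show -((d:ℝ) * (k:ℝ)) = -(((k*d : ℕ)):ℝ) by push_cast; ring,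
        Real.rpow_neg (by norm_num), Real.rpow_natCast]
    have h2 : (2:ℝ) ^ (-((d:ℝ) * (k:ℝ))) ≤ (2:ℝ) ^ (-(s * (k:ℝ))) := by
      rw [Real.rpow_le_rpow_left_iff (by norm_num : (1:ℝ) < 2)]
      have hk0 : (0:ℝ) ≤ (k:ℝ) := Nat.cast_nonneg k
      nlinarith
    calc ε ≤ ((2:ℝ) ^ (k*d))⁻¹ := hε
    _ = (2:ℝ) ^ (-((d:ℝ) * (k:ℝ))) := h1
    _ ≤ (2:ℝ) ^ (-(s * (k:ℝ))) := h2
    _ = B := rfl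
  -- heq : the defining equation in two-point form (for ε > 0)
  have hklog : Real.log ((2:ℝ)^k) = (k:ℝ) * Real.log 2 := by
    rw [Real.log_pow]
  have hFs' : (1-ε) * Real.log (A / (1-ε)) + ε * Real.log (1/ε) - s * ε * ((k:ℝ) * Real.log 2) = 0 := by
    have := hFs
    rw [Ffun, hklog] at this
    linarith [this]
  constructor
  · -- MEMBERSHIP
    set pf : ℕ → ℝ := fun j => if j < n * k then (1-ε) * q (expo d k j) / A else ε with hpf
    refine ⟨fun i => pf (i : ℕ), ?_, ?_, ?_, ?_⟩
    · intro i
      rw [hpf]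
      dsimp only
      split
      · positivity
      · exact hε0
    · rw [Fin.sum_univ_eq_sum_range (fun j => pf j) N, hN, Finset.sum_range_succ]
      have hlast : pf (n*k) = ε := by rw [hpf]; simp
      have hfirst : ∑ j ∈ Finset.range (n*k), pf j = 1 - ε := by
        have h1 : ∀ j ∈ Finset.range (n*k), pf j = (1-ε) * q (expo d k j) / A := by
          intro j hj
          rw [hpf]
          simp only
          rw [if_pos (Finset.mem_range.mp hj)]
        rw [Finset.sum_congr rfl h1, ← Finset.sum_div, ← Finset.mul_sum, hsumq,
          mul_div_assoc, div_self (ne_of_gt hApos), mul_one]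
      rw [hlast, hfirst]
      ring
    · show pf (n*k) ≤ ε
      rw [hpf]
      simp
    · -- value equals s
      have hnum : ∑ i : Fin N, Real.negMulLog (pf (i:ℕ)) =
          ∑ j ∈ Finset.range N, Real.negMulLog (pf j) :=
        Fin.sum_univ_eq_sum_range (fun j => Real.negMulLog (pf j)) N
      have hden : ∑ i : Fin N, pf (i:ℕ) * (expo d k (i : ℕ) : ℝ) =
          ∑ j ∈ Finset.range N, pf j * (expo d k j : ℝ) :=
        Fin.sum_univ_eq_sum_range (fun j => pf j * (expo d k j : ℝ)) N
      set E : ℝ := ∑ j ∈ Finset.range (n*k), pf j * (expo d k j : ℝ) with hE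
      have hdenval : ∑ j ∈ Finset.range N, pf j * (expo d k j : ℝ) = E + ε * k := by
        rw [hN, Finset.sum_range_succ, expo_last hd hk]
        have : pf (n*k) = ε := by rw [hpf]; simp
        rw [this]
      have hnumval : ∑ j ∈ Finset.range N, Real.negMulLog (pf j)
          = (1-ε) * Real.log (A/(1-ε)) + ε * Real.log (1/ε) + s * Real.log 2 * E := by
        rw [hN, Finset.sum_range_succ]
        have hlast : Real.negMulLog (pf (n*k)) = ε * Real.log (1/ε) := by
          rw [hpf]
          simp only [lt_irrefl, if_false]
          rw [Real.negMulLog, one_div, Real.log_inv]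
          ring
        have hmain : ∑ j ∈ Finset.range (n*k), Real.negMulLog (pf j)
            = (1-ε) * (Real.log A - Real.log (1-ε)) + s * Real.log 2 * E := by
          have hterm : ∀ j ∈ Finset.range (n*k), Real.negMulLog (pf j)
              = pf j * (Real.log A - Real.log (1-ε)) + s * Real.log 2 * (pf j * (expo d k j : ℝ)) := by
            intro j hj
            have hjlt := Finset.mem_range.mp hj
            have hpfj : pf j = (1-ε) * q (expo d k j) / A := by
              rw [hpf]; simp only; rw [if_pos hjlt]
            have hqj := hqpos (expo d k j)
            have hpfpos : 0 < pf j := by rw [hpfj]; positivity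
            rw [Real.negMulLog]
            rw [hpfj]
            rw [show (1-ε) * q (expo d k j) / A = (1-ε) * q (expo d k j) / A from rfl]
            rw [Real.log_div (by positivity) (ne_of_gt hApos),
              Real.log_mul (ne_of_gt h1e) (ne_of_gt hqj), hlogq]
            field_simp
            ring
          rw [Finset.sum_congr rfl hterm, Finset.sum_add_distrib, ← Finset.sum_mul,
            ← Finset.mul_sum]
          have hfirst : ∑ j ∈ Finset.range (n*k), pf j = 1 - ε := by
            have h1 : ∀ j ∈ Finset.range (n*k), pf j = (1-ε) * q (expo d k j) / A := by
              intro j hj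
              rw [hpf]
              simp only
              rw [if_pos (Finset.mem_range.mp hj)]
            rw [Finset.sum_congr rfl h1, ← Finset.sum_div, ← Finset.mul_sum, hsumq,
              mul_div_assoc, div_self (ne_of_gt hApos), mul_one]
          rw [hfirst, hE]
        rw [hmain, hlast]
        have hlogdiv : Real.log (A/(1-ε)) = Real.log A - Real.log (1-ε) :=
          Real.log_div (ne_of_gt hApos) (ne_of_gt h1e)
        rw [hlogdiv]
        ring
      -- assemble
      have hdpos : 0 < (∑ i : Fin N, pf (i:ℕ) * (expo d k (i : ℕ) : ℝ)) * Real.log 2 := by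
        apply mul_pos _ hlog2pos
        have := denom_ge (fun i => pf (i:ℕ))
          (by intro i
              rw [hpf]
              dsimp only
              split
              · positivity
              · exact hε0)
          (by rw [Fin.sum_univ_eq_sum_range (fun j => pf j) N, hN, Finset.sum_range_succ]
              have hlast : pf (n*k) = ε := by rw [hpf]; simp
              have hfirst : ∑ j ∈ Finset.range (n*k), pf j = 1 - ε := by
                have h1 : ∀ j ∈ Finset.range (n*k), pf j = (1-ε) * q (expo d k j) / A := by
                  intro j hj
                  rw [hpf]
                  simp only
                  rw [if_pos (Finset.mem_range.mp hj)]
                rw [Finset.sum_congr rfl h1, ← Finset.sum_div, ← Finset.mul_sum, hsumq,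
                  mul_div_assoc, div_self (ne_of_gt hApos), mul_one]
              rw [hlast, hfirst]; ring)
        linarith
      rw [denom_eq (fun i => pf (i:ℕ))]
      have hnum_eq : (∑ i : Fin N, Real.negMulLog (pf (i:ℕ)))
          = s * ((∑ i : Fin N, pf (i:ℕ) * (expo d k (i : ℕ) : ℝ)) * Real.log 2) := by
        rw [hnum, hnumval, hden, hdenval]
        nlinarith [hFs']
      rw [hnum_eq, mul_div_cancel_right₀ s (ne_of_gt (by
        rw [← denom_eq (fun i => pf (i:ℕ))] at hdpos
        rw [denom_eq (fun i => pf (i:ℕ))] at hdpos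
        exact hdpos))]
  · -- UPPER BOUND
    rintro v ⟨p, hp, hpsum, hplast, hv⟩
    set P : ℕ → ℝ := fun j => if h : j < N then p ⟨j, h⟩ else 0 with hP
    have hPp : ∀ i : Fin N, P (i:ℕ) = p i := by
      intro i
      rw [hP]
      simp only
      rw [dif_pos i.isLt]
    have hPnonneg : ∀ j, 0 ≤ P j := by
      intro j
      rw [hP]
      dsimp only
      split
      · exact hp _
      · exact le_refl 0
    have hPsum : ∑ j ∈ Finset.range N, P j = 1 := by
      rw [← Fin.sum_univ_eq_sum_range (fun j => P j) N, ← hpsum]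
      exact Finset.sum_congr rfl fun i _ => hPp i
    set t : ℝ := P (n*k) with ht
    have htp : t = p ⟨n*k, Nat.lt_succ_self _⟩ := by
      rw [ht, hP]
      exact dif_pos (Nat.lt_succ_self _)
    have ht0 : 0 ≤ t := hPnonneg _
    have htε : t ≤ ε := htp ▸ hplast
    have ht1 : t < 1 := lt_of_le_of_lt htε (by linarith)
    set m : ℝ := 1 - t with hm
    have hm0 : 0 < m := by rw [hm]; linarith
    have hPm : ∑ j ∈ Finset.range (n*k), P j = m := by
      have h2 := hPsum
      rw [hN, Finset.sum_range_succ] at h2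
      rw [hm]
      linarith [h2]
    have hgibbs := gibbs (Finset.range (n*k)) (fun j => P j / m) (fun j => q (expo d k j))
      (fun j _ => div_nonneg (hPnonneg j) hm0.le) (fun j _ => hqpos _)
      (by rw [← Finset.sum_div, hPm, div_self (ne_of_gt hm0)])
    rw [hsumq] at hgibbs
    have key : ∑ j ∈ Finset.range (n*k), (Real.negMulLog (P j) + P j * Real.log (q (expo d k j)))
        ≤ m * Real.log A - m * Real.log m := by
      have h2 := mul_le_mul_of_nonneg_left hgibbs hm0.le
      rw [Finset.mul_sum] at h2
      have hterm : ∀ j ∈ Finset.range (n*k),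
          m * (Real.negMulLog (P j / m) + P j / m * Real.log (q (expo d k j)))
          = (Real.negMulLog (P j) + P j * Real.log (q (expo d k j))) + P j * Real.log m := by
        intro j _
        rw [mul_add, negMulLog_div_mul _ _ hm0]
        have h3 : m * (P j / m * Real.log (q (expo d k j))) = P j * Real.log (q (expo d k j)) := by
          field_simp
        rw [h3]
        ring
      rw [Finset.sum_congr rfl hterm, Finset.sum_add_distrib, ← Finset.sum_mul, hPm] at h2
      linarith [h2]
    have htwo : m * Real.log A - m * Real.log m + (Real.negMulLog t + t * Real.log B) ≤ 0 := by
      rcases eq_or_lt_of_le hε0 with h0 | h0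
      · -- ε = 0
        have ht00 : t = 0 := le_antisymm (h0 ▸ htε) ht0
        have hA1 : Real.log A = 0 := by
          have h4 := hFs'
          rw [← h0] at h4
          simpa using h4
        rw [hm, ht00, hA1]
        simp
      · -- ε > 0
        have hlogB : Real.log B = -(s * (k:ℝ) * Real.log 2) := by
          rw [hB, hlogq k]
        have heq2 : (1-ε) * Real.log (A/(1-ε)) + ε * Real.log (B/ε) = 0 := by
          have h3 : ε * Real.log (B/ε) = ε * Real.log (1/ε) - s * ε * ((k:ℝ) * Real.log 2) := by
            rw [Real.log_div (ne_of_gt hBpos) (ne_of_gt h0), hlogB, one_div, Real.log_inv]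
            ring
          linarith [hFs', h3]
        have hA1e : A ≤ 1 - ε := by
          have hlogBε : 0 ≤ Real.log (B/ε) := Real.log_nonneg ((one_le_div h0).mpr hεB)
          have h4 : (1-ε) * Real.log (A/(1-ε)) ≤ 0 := by
            linarith [heq2, mul_nonneg hε0 hlogBε]
          have h5 : Real.log (A/(1-ε)) ≤ 0 := by
            by_contra hcon
            push_neg at hcon
            exact absurd h4 (not_le.mpr (mul_pos h1e hcon))
          have h6 : A/(1-ε) ≤ 1 := by
            by_contra hcon
            push_neg at hcon
            linarith [Real.log_pos hcon]
          calc A = (A/(1-ε)) * (1-ε) := by field_simp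
          _ ≤ 1 * (1-ε) := mul_le_mul_of_nonneg_right h6 (le_of_lt h1e)
          _ = 1-ε := one_mul _
        have hcond : ε * (A + B) ≤ B := by
          have c1 : ε * (1-ε) ≤ B * (1-ε) := mul_le_mul_of_nonneg_right hεB (le_of_lt h1e)
          have c2 : ε * A ≤ ε * (1-ε) := mul_le_mul_of_nonneg_left hA1e hε0
          nlinarith [c1, c2]
        have htp2 := two_point A B ε t hApos hBpos h0 (by linarith) ht0 htε hcond heq2
        have e1 : (1-t) * Real.log (A/(1-t)) = m * Real.log A - m * Real.log m := by
          rw [← hm, Real.log_div (ne_of_gt hApos) (ne_of_gt hm0)]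
          ring
        have e2 : t * Real.log (B/t) = Real.negMulLog t + t * Real.log B := by
          rcases eq_or_ne t 0 with h7 | htne
          · rw [h7]; simp
          · rw [Real.log_div (ne_of_gt hBpos) htne, Real.negMulLog]
            ring
        rw [e1, e2] at htp2
        linarith [htp2]
    -- final assembly
    have hdpos : 0 < (∑ i, p i * (expo d k (i : ℕ) : ℝ)) * Real.log 2 := by
      have := denom_ge p hp hpsum
      nlinarith [hlog2pos]
    rw [hv, denom_eq p, div_le_iff₀ hdpos]
    have hnum' : ∑ i : Fin N, Real.negMulLog (p i) = ∑ j ∈ Finset.range N, Real.negMulLog (P j) := by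
      rw [← Fin.sum_univ_eq_sum_range (fun j => Real.negMulLog (P j)) N]
      exact Finset.sum_congr rfl fun i _ => by rw [hPp i]
    have hden' : ∑ i : Fin N, p i * (expo d k (i : ℕ) : ℝ)
        = ∑ j ∈ Finset.range N, P j * (expo d k j : ℝ) := by
      rw [← Fin.sum_univ_eq_sum_range (fun j => P j * (expo d k j : ℝ)) N]
      exact Finset.sum_congr rfl fun i _ => by rw [hPp i]
    rw [hnum', hden', hN, Finset.sum_range_succ, Finset.sum_range_succ, expo_last hd hk]
    have hsumlog : ∑ j ∈ Finset.range (n*k), P j * Real.log (q (expo d k j))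
        = -(s * Real.log 2 * ∑ j ∈ Finset.range (n*k), P j * (expo d k j : ℝ)) := by
      rw [Finset.mul_sum, ← Finset.sum_neg_distrib]
      apply Finset.sum_congr rfl
      intro j _
      rw [hlogq]
      ring
    have hsplitkey : ∑ j ∈ Finset.range (n*k), Real.negMulLog (P j)
        ≤ m * Real.log A - m * Real.log m
          + s * Real.log 2 * ∑ j ∈ Finset.range (n*k), P j * (expo d k j : ℝ) := by
      have h8 : ∑ j ∈ Finset.range (n*k), (Real.negMulLog (P j) + P j * Real.log (q (expo d k j)))
          = ∑ j ∈ Finset.range (n*k), Real.negMulLog (P j)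
            + ∑ j ∈ Finset.range (n*k), P j * Real.log (q (expo d k j)) :=
        Finset.sum_add_distrib
      rw [h8, hsumlog] at key
      linarith [key]
    have hlogB : Real.log B = -(s * (k:ℝ) * Real.log 2) := by rw [hB, hlogq k]
    have hPnk : P (n*k) = t := rfl
    rw [hPnk]
    have htwo' := htwo
    rw [hlogB] at htwo'
    nlinarith [hsplitkey, htwo']
end
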